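/- arXiv:1602.08359 — 11 statements merged into one kernel-verified Lean document; each statement's English description precedes it below -/
import Mathlib

section
/- Let S = U ⊕ N_8 be the even hyperbolic lattice of rank 10 with basis c1, c2 of U ((c1,c1) = (c2,c2) = 0, (c1,c2) = -1) and N_8 the lattice generated by e1,...,e8 with (e_i,e_j) = 2δ_ij together with the vector (e1 + ... + e8)/2, the two summands being orthogonal. Let P consist of the 18 vectors e1,...,e8, c1 - e1, ..., c1 - e8, f = -c1 + c2, and f' = c1 + c2 - (e1 + ... + e8)/2. Then every element of P lies in S and has square 2, and the vector ρ = 3c1 + 2c2 - (e1 + ... + e8)/2 ∈ S satisfies (ρ, δ) = -1 for every δ ∈ P. -/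
/-- The bilinear form of `S = U ⊕ N₈` on `ℚ^10`, in the coordinates `(c1, c2, e1, …, e8)`
where `(c1,c1) = (c2,c2) = 0`, `(c1,c2) = -1` and `(e_i,e_j) = 2δ_ij`. -/
def B2 (x y : Fin 10 → ℚ) : ℚ :=
  -(x 0 * y 1 + x 1 * y 0) + 2 * ∑ i : Fin 8, x i.succ.succ * y i.succ.succ

/-- Membership in the lattice `S = U ⊕ N₈ ⊂ ℚ^10`: integral `c`-coordinates, and the
`e`-coordinates all integral or all half-integral (since `N₈ = ℤ^8 + ℤ·(e1+…+e8)/2`). -/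
def inS2 (x : Fin 10 → ℚ) : Prop :=
  (∃ a : ℤ, x 0 = a) ∧ (∃ a : ℤ, x 1 = a) ∧
    ((∀ i : Fin 8, ∃ k : ℤ, x i.succ.succ = k) ∨
      (∀ i : Fin 8, ∃ k : ℤ, x i.succ.succ = k + 1/2))

def c1v : Fin 10 → ℚ := fun j => if j = 0 then 1 else 0
def c2v : Fin 10 → ℚ := fun j => if j = 1 then 1 else 0
def Ev (i : Fin 8) : Fin 10 → ℚ := fun j => if j = i.succ.succ then 1 else 0
/-- `h = (e1 + … + e8)/2`. -/
def hv2 : Fin 10 → ℚ := fun j => if j = 0 ∨ j = 1 then 0 else 1/2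

/-- The set `P` of 18 vectors: `e1, …, e8`, `c1 - e1, …, c1 - e8`, `f = -c1 + c2`,
and `f' = c1 + c2 - (e1 + … + e8)/2`. -/
def PS2 : Set (Fin 10 → ℚ) :=
  Set.range Ev ∪ Set.range (fun i => c1v - Ev i) ∪ {-c1v + c2v, c1v + c2v - hv2}

/-- `ρ = 3c1 + 2c2 - (e1 + … + e8)/2`. -/
def rho2 : Fin 10 → ℚ := fun j => if j = 0 then 3 else if j = 1 then 2 else -(1/2)

lemma succsucc_ne0 (i : Fin 8) : (i.succ.succ : Fin 10) ≠ 0 := by fin_cases i <;> decide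
lemma succsucc_ne1 (i : Fin 8) : (i.succ.succ : Fin 10) ≠ 1 := by fin_cases i <;> decide

lemma inS2_Ev (i : Fin 8) : inS2 (Ev i) := by
  refine ⟨⟨0, by simp [Ev, (succsucc_ne0 i).symm]⟩,
    ⟨0, by simp [Ev, (succsucc_ne1 i).symm]⟩, Or.inl fun j => ?_⟩
  by_cases h : (j.succ.succ : Fin 10) = i.succ.succ
  · exact ⟨1, by simp [Ev, h]⟩
  · exact ⟨0, by simp [Ev, h]⟩

lemma inS2_c1_sub_Ev (i : Fin 8) : inS2 (c1v - Ev i) := by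
  refine ⟨⟨1, by simp [c1v, Ev, (succsucc_ne0 i).symm]⟩,
    ⟨0, by simp [c1v, Ev, (succsucc_ne1 i).symm]⟩, Or.inl fun j => ?_⟩
  by_cases h : (j.succ.succ : Fin 10) = i.succ.succ
  · exact ⟨-1, by simp [c1v, Ev, h, succsucc_ne0 j, succsucc_ne0 i]⟩
  · exact ⟨0, by simp [c1v, Ev, h, succsucc_ne0 j, succsucc_ne0 i]⟩

lemma inS2_f : inS2 (-c1v + c2v) := by
  refine ⟨⟨-1, by simp [c1v, c2v]⟩, ⟨1, by simp [c1v, c2v]⟩, Or.inl fun j => ?_⟩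
  exact ⟨0, by simp [c1v, c2v, succsucc_ne0 j, succsucc_ne1 j]⟩

lemma inS2_f' : inS2 (c1v + c2v - hv2) := by
  refine ⟨⟨1, by simp [c1v, c2v, hv2]⟩, ⟨1, by simp [c1v, c2v, hv2]⟩,
    Or.inr fun j => ⟨-1, ?_⟩⟩
  simp [c1v, c2v, hv2, succsucc_ne0 j, succsucc_ne1 j]
  norm_num

lemma sq_Ev (i : Fin 8) : B2 (Ev i) (Ev i) = 2 := by
  fin_cases i <;> simp +decide [B2, Ev, Fin.sum_univ_eight]

lemma sq_c1_sub_Ev (i : Fin 8) : B2 (c1v - Ev i) (c1v - Ev i) = 2 := by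
  fin_cases i <;> simp +decide [B2, Ev, c1v, Fin.sum_univ_eight]

lemma sq_f : B2 (-c1v + c2v) (-c1v + c2v) = 2 := by
  simp +decide [B2, c1v, c2v, Fin.sum_univ_eight]; norm_num

lemma sq_f' : B2 (c1v + c2v - hv2) (c1v + c2v - hv2) = 2 := by
  simp +decide [B2, c1v, c2v, hv2, Fin.sum_univ_eight]
  norm_num

lemma rho_Ev (i : Fin 8) : B2 rho2 (Ev i) = -1 := by
  fin_cases i <;> simp +decide [B2, rho2, Ev, Fin.sum_univ_eight]

lemma rho_c1_sub_Ev (i : Fin 8) : B2 rho2 (c1v - Ev i) = -1 := by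
  fin_cases i <;> simp +decide [B2, rho2, Ev, c1v, Fin.sum_univ_eight] <;> norm_num

lemma rho_f : B2 rho2 (-c1v + c2v) = -1 := by
  simp +decide [B2, rho2, c1v, c2v, Fin.sum_univ_eight]; norm_num

lemma rho_f' : B2 rho2 (c1v + c2v - hv2) = -1 := by
  simp +decide [B2, rho2, c1v, c2v, hv2, Fin.sum_univ_eight]
  norm_num

theorem stmt2 :
    (∀ δ ∈ PS2, inS2 δ ∧ B2 δ δ = 2) ∧
    inS2 rho2 ∧ (∀ δ ∈ PS2, B2 rho2 δ = -1) := by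
  have hcases : ∀ δ ∈ PS2, (∃ i, δ = Ev i) ∨ (∃ i, δ = c1v - Ev i) ∨
      δ = -c1v + c2v ∨ δ = c1v + c2v - hv2 := by
    intro δ hδ
    rcases hδ with (⟨i, hi⟩ | ⟨i, hi⟩) | (h | h)
    · exact Or.inl ⟨i, hi.symm⟩
    · exact Or.inr (Or.inl ⟨i, hi.symm⟩)
    · exact Or.inr (Or.inr (Or.inl h))
    · exact Or.inr (Or.inr (Or.inr h))
  refine ⟨?_, ?_, ?_⟩
  · intro δ hδ
    rcases hcases δ hδ with ⟨i, rfl⟩ | ⟨i, rfl⟩ | rfl | rfl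
    · exact ⟨inS2_Ev i, sq_Ev i⟩
    · exact ⟨inS2_c1_sub_Ev i, sq_c1_sub_Ev i⟩
    · exact ⟨inS2_f, sq_f⟩
    · exact ⟨inS2_f', sq_f'⟩
  · exact ⟨⟨3, by simp [rho2]⟩, ⟨2, by simp [rho2]⟩, Or.inr fun i => ⟨-1, by
      simp [rho2, succsucc_ne0 i, succsucc_ne1 i]; norm_num⟩⟩
  · intro δ hδ
    rcases hcases δ hδ with ⟨i, rfl⟩ | ⟨i, rfl⟩ | rfl | rfl
    · exact rho_Ev i
    · exact rho_c1_sub_Ev i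
    · exact rho_f
    · exact rho_f'
end

section
/- Let S = U(3) ⊕ 2A_1 be the even hyperbolic lattice of rank 4 with basis c1, c2, e1, e2 where (c1,c1) = (c2,c2) = 0, (c1,c2) = -3, (e_i,e_j) = 2δ_ij, and the two summands are orthogonal. Let P = {e1, e2, c1 - e1, c1 - e2, c2 - e1, c2 - e2, 2c1 + 2c2 - 3e1 - 2e2, 2c1 + 2c2 - 2e1 - 3e2}. Then every element of P has square 2, but there exists no vector ρ ∈ S ⊗ ℚ with (ρ, δ) = -1 for every δ ∈ P. -/
/-- The bilinear form on `ℚ^n` given by a Gram matrix `G`. -/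
def bil {n : ℕ} (G : Matrix (Fin n) (Fin n) ℚ) (x y : Fin n → ℚ) : ℚ :=
  ∑ i, ∑ j, x i * G i j * y j

/-- Gram matrix of `S = U(3) ⊕ 2A₁` in the basis `c1, c2, e1, e2`. -/
def G4 : Matrix (Fin 4) (Fin 4) ℚ := !![0, -3, 0, 0; -3, 0, 0, 0; 0, 0, 2, 0; 0, 0, 0, 2]

/-- `P = (e1, e2, c1-e1, c1-e2, c2-e1, c2-e2, 2c1+2c2-3e1-2e2, 2c1+2c2-2e1-3e2)`. -/
def P4 : Fin 8 → (Fin 4 → ℚ) :=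
  ![![0, 0, 1, 0], ![0, 0, 0, 1], ![1, 0, -1, 0], ![1, 0, 0, -1],
    ![0, 1, -1, 0], ![0, 1, 0, -1], ![2, 2, -3, -2], ![2, 2, -2, -3]]

theorem stmt4 :
    (∀ i, bil G4 (P4 i) (P4 i) = 2) ∧
    ¬ ∃ ρ : Fin 4 → ℚ, ∀ i, bil G4 ρ (P4 i) = -1 := by
  constructor
  · intro i
    fin_cases i
    · show bil G4 ![0, 0, 1, 0] ![0, 0, 1, 0] = 2
      norm_num [bil, G4, Fin.sum_univ_succ]
    · show bil G4 ![0, 0, 0, 1] ![0, 0, 0, 1] = 2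
      norm_num [bil, G4, Fin.sum_univ_succ]
    · show bil G4 ![1, 0, -1, 0] ![1, 0, -1, 0] = 2
      norm_num [bil, G4, Fin.sum_univ_succ]
    · show bil G4 ![1, 0, 0, -1] ![1, 0, 0, -1] = 2
      norm_num [bil, G4, Fin.sum_univ_succ]
    · show bil G4 ![0, 1, -1, 0] ![0, 1, -1, 0] = 2
      norm_num [bil, G4, Fin.sum_univ_succ]
    · show bil G4 ![0, 1, 0, -1] ![0, 1, 0, -1] = 2
      norm_num [bil, G4, Fin.sum_univ_succ]
    · show bil G4 ![2, 2, -3, -2] ![2, 2, -3, -2] = 2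
      norm_num [bil, G4, Fin.sum_univ_succ]
    · show bil G4 ![2, 2, -2, -3] ![2, 2, -2, -3] = 2
      norm_num [bil, G4, Fin.sum_univ_succ]
  · rintro ⟨ρ, h⟩
    have h0 : bil G4 ρ ![0, 0, 1, 0] = -1 := h 0
    have h1 : bil G4 ρ ![0, 0, 0, 1] = -1 := h 1
    have h2 : bil G4 ρ ![1, 0, -1, 0] = -1 := h 2
    have h4 : bil G4 ρ ![0, 1, -1, 0] = -1 := h 4
    have h6 : bil G4 ρ ![2, 2, -3, -2] = -1 := h 6
    simp [bil, G4, Fin.sum_univ_succ] at h0 h1 h2 h4 h6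
    have e : ρ (Fin.succ 2) = ρ 3 := rfl
    linarith
end

section
/- Let S = ⟨-4⟩ ⊕ ⟨4⟩ ⊕ A_2 be the even hyperbolic lattice of rank 4 with basis h, e, e1, e2 where (h,h) = -4, (e,e) = 4, the pair e1, e2 has Gram matrix [[2,-1],[-1,2]], and the three summands are mutually orthogonal. Let P = {e1, e2, h - e - e1 - e2, h + e - e1 - e2, h - e1 - 2e2, h - 2e1 - e2}. Then every element of P has square 2, but there exists no vector ρ ∈ S ⊗ ℚ with (ρ, δ) = -1 for every δ ∈ P. -/
/-- Gram matrix of `S = ⟨-4⟩ ⊕ ⟨4⟩ ⊕ A₂` in the basis `h, e, e1, e2`. -/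
def G5 : Matrix (Fin 4) (Fin 4) ℚ := !![-4, 0, 0, 0; 0, 4, 0, 0; 0, 0, 2, -1; 0, 0, -1, 2]

/-- `P = (e1, e2, h-e-e1-e2, h+e-e1-e2, h-e1-2e2, h-2e1-e2)`. -/
def P5 : Fin 6 → (Fin 4 → ℚ) :=
  ![![0, 0, 1, 0], ![0, 0, 0, 1], ![1, -1, -1, -1], ![1, 1, -1, -1],
    ![1, 0, -1, -2], ![1, 0, -2, -1]]

theorem stmt5 :
    (∀ i, bil G5 (P5 i) (P5 i) = 2) ∧
    ¬ ∃ ρ : Fin 4 → ℚ, ∀ i, bil G5 ρ (P5 i) = -1 := by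
  constructor
  · intro i
    fin_cases i <;>
      norm_num [bil, G5, P5, Fin.sum_univ_four, Matrix.vecHead, Matrix.vecTail,
        Matrix.cons_val_succ, Matrix.cons_val_zero, Matrix.cons_val_one, Matrix.cons_val_two, Matrix.cons_val_three]
  · rintro ⟨ρ, hρ⟩
    have h0 := hρ 0
    have h1 := hρ 1
    have h2 := hρ 2
    have h3 := hρ 3
    have h4 := hρ 4
    rw [show P5 0 = ![0,0,1,0] from rfl] at h0
    rw [show P5 1 = ![0,0,0,1] from rfl] at h1
    rw [show P5 2 = ![1,-1,-1,-1] from rfl] at h2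
    rw [show P5 3 = ![1,1,-1,-1] from rfl] at h3
    rw [show P5 4 = ![1,0,-1,-2] from rfl] at h4
    simp [bil, G5, Fin.sum_univ_four, Matrix.vecHead, Matrix.vecTail] at h0 h1 h2 h3 h4
    linarith
end

section
/- Let S be the even hyperbolic lattice of rank 4 with basis h, e1, e2, e3 and Gram matrix [[-12,-2,0,0],[-2,2,-1,0],[0,-1,2,-1],[0,0,-1,2]]. Let P = {e1, e2, e3, h - 2e1 - 2e2 - e3, h - 2e2 - 3e3, h - e1 - 3e2 - 2e3, 2h - 2e1 - 4e2 - 5e3, 2h - 3e1 - 4e2 - 4e3}. Then every element of P has square 2, but there exists no vector ρ ∈ S ⊗ ℚ with (ρ, δ) = -1 for every δ ∈ P. -/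
/-- The Gram matrix of `S` in the basis `h, e1, e2, e3`. -/
def G6 : Matrix (Fin 4) (Fin 4) ℚ :=
  !![-12, -2, 0, 0; -2, 2, -1, 0; 0, -1, 2, -1; 0, 0, -1, 2]

/-- `P = (e1, e2, e3, h-2e1-2e2-e3, h-2e2-3e3, h-e1-3e2-2e3, 2h-2e1-4e2-5e3, 2h-3e1-4e2-4e3)`. -/
def P6 : Fin 8 → (Fin 4 → ℚ) :=
  ![![0, 1, 0, 0], ![0, 0, 1, 0], ![0, 0, 0, 1], ![1, -2, -2, -1],
    ![1, 0, -2, -3], ![1, -1, -3, -2], ![2, -2, -4, -5], ![2, -3, -4, -4]]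

private lemma bil_eval (x : Fin 4 → ℚ) (a b c d : ℚ) :
    bil G6 x ![a, b, c, d] =
      x 0 * (-12) * a + x 0 * (-2) * b + (x 1 * (-2) * a + x 1 * 2 * b + x 1 * (-1) * c)
        + (x 2 * (-1) * b + x 2 * 2 * c + x 2 * (-1) * d)
        + (x 3 * (-1) * c + x 3 * 2 * d) := by
  simp only [bil, G6, Fin.sum_univ_four, Matrix.cons_val_zero, Matrix.cons_val_one,
    Matrix.head_cons, Matrix.cons_val_two, Matrix.cons_val_three, Matrix.tail_cons,
    Matrix.of_apply, Matrix.cons_val', Matrix.empty_val', Matrix.cons_val_fin_one,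
    Matrix.head_fin_const]
  ring

theorem stmt6 :
    (∀ i, bil G6 (P6 i) (P6 i) = 2) ∧
    ¬ ∃ ρ : Fin 4 → ℚ, ∀ i, bil G6 ρ (P6 i) = -1 := by
  constructor
  · intro i
    fin_cases i
    · show bil G6 ![0,1,0,0] ![0,1,0,0] = 2; rw [bil_eval]; simp only [Matrix.cons_val_zero, Matrix.cons_val_one, Matrix.cons_val_two, Matrix.cons_val_three, Matrix.head_cons, Matrix.tail_cons]; norm_num
    · show bil G6 ![0,0,1,0] ![0,0,1,0] = 2; rw [bil_eval]; simp only [Matrix.cons_val_zero, Matrix.cons_val_one, Matrix.cons_val_two, Matrix.cons_val_three, Matrix.head_cons, Matrix.tail_cons]; norm_num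
    · show bil G6 ![0,0,0,1] ![0,0,0,1] = 2; rw [bil_eval]; simp only [Matrix.cons_val_zero, Matrix.cons_val_one, Matrix.cons_val_two, Matrix.cons_val_three, Matrix.head_cons, Matrix.tail_cons]; norm_num
    · show bil G6 ![1,-2,-2,-1] ![1,-2,-2,-1] = 2; rw [bil_eval]; simp only [Matrix.cons_val_zero, Matrix.cons_val_one, Matrix.cons_val_two, Matrix.cons_val_three, Matrix.head_cons, Matrix.tail_cons]; norm_num
    · show bil G6 ![1,0,-2,-3] ![1,0,-2,-3] = 2; rw [bil_eval]; simp only [Matrix.cons_val_zero, Matrix.cons_val_one, Matrix.cons_val_two, Matrix.cons_val_three, Matrix.head_cons, Matrix.tail_cons]; norm_num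
    · show bil G6 ![1,-1,-3,-2] ![1,-1,-3,-2] = 2; rw [bil_eval]; simp only [Matrix.cons_val_zero, Matrix.cons_val_one, Matrix.cons_val_two, Matrix.cons_val_three, Matrix.head_cons, Matrix.tail_cons]; norm_num
    · show bil G6 ![2,-2,-4,-5] ![2,-2,-4,-5] = 2; rw [bil_eval]; simp only [Matrix.cons_val_zero, Matrix.cons_val_one, Matrix.cons_val_two, Matrix.cons_val_three, Matrix.head_cons, Matrix.tail_cons]; norm_num
    · show bil G6 ![2,-3,-4,-4] ![2,-3,-4,-4] = 2; rw [bil_eval]; simp only [Matrix.cons_val_zero, Matrix.cons_val_one, Matrix.cons_val_two, Matrix.cons_val_three, Matrix.head_cons, Matrix.tail_cons]; norm_num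
  · rintro ⟨ρ, h⟩
    have h0 := h 0
    have h1 := h 1
    have h2 := h 2
    have h3 := h 3
    have h5 := h 5
    rw [show P6 0 = ![0,1,0,0] from rfl, bil_eval] at h0
    rw [show P6 1 = ![0,0,1,0] from rfl, bil_eval] at h1
    rw [show P6 2 = ![0,0,0,1] from rfl, bil_eval] at h2
    rw [show P6 3 = ![1,-2,-2,-1] from rfl, bil_eval] at h3
    rw [show P6 5 = ![1,-1,-3,-2] from rfl, bil_eval] at h5
    norm_num at h0 h1 h2 h3 h5
    linarith
end

section
/- For every integer k ≥ 1, the lattices ⟨-2⟩ ⊕ (k+1)⟨2⟩ and U(2) ⊕ k⟨2⟩ are isometric. -/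
def G8a (k : ℕ) : Matrix (Fin (k+2)) (Fin (k+2)) ℤ :=
  Matrix.of fun i j => if i = j then (if (i : ℕ) = 0 then -2 else 2) else 0

def G8b (k : ℕ) : Matrix (Fin (k+2)) (Fin (k+2)) ℤ :=
  Matrix.of fun i j =>
    if ((i : ℕ) = 0 ∧ (j : ℕ) = 1) ∨ ((i : ℕ) = 1 ∧ (j : ℕ) = 0) then -2
    else if i = j ∧ 2 ≤ (i : ℕ) then 2 else 0

/-- For every `k ≥ 1` the lattices `⟨-2⟩ ⊕ (k+1)⟨2⟩` and `U(2) ⊕ k⟨2⟩` are isometric. -/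
theorem stmt8 (k : ℕ) (hk : 1 ≤ k) :
    ∃ P : Matrix (Fin (k+2)) (Fin (k+2)) ℤ, IsUnit P.det ∧
      P.transpose * G8a k * P = G8b k := by
  obtain ⟨m, rfl⟩ : ∃ m, k = m + 1 := ⟨k - 1, by omega⟩
  set A : Matrix (Fin 3) (Fin 3) ℤ := !![-2,0,0;0,2,0;0,0,2] with hAdef
  set B : Matrix (Fin 3) (Fin 3) ℤ := !![1,1,1;1,0,1;0,1,1] with hBdef
  set C : Matrix (Fin 3) (Fin 3) ℤ := !![0,-2,0;-2,0,0;0,0,2] with hCdef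
  set e : Fin 3 ⊕ Fin m ≃ Fin (m + 1 + 2) := finSumFinEquiv.trans (finCongr (by omega)) with hedef
  have hL : ∀ a : Fin 3, ((e (Sum.inl a)) : ℕ) = a := by intro a; simp [hedef]
  have hR : ∀ b : Fin m, ((e (Sum.inr b)) : ℕ) = 3 + b := by
    intro b; simp [hedef]; omega
  have key : ∀ (A' : Matrix (Fin 3) (Fin 3) ℤ) (G : Matrix (Fin (m+1+2)) (Fin (m+1+2)) ℤ),
      (∀ x y, (Matrix.fromBlocks A' 0 0 ((2:ℤ) • (1 : Matrix (Fin m) (Fin m) ℤ))) x y = G (e x) (e y)) →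
      G = Matrix.reindex e e (Matrix.fromBlocks A' 0 0 ((2:ℤ) • 1)) := by
    intro A' G h
    ext i j
    have := h (e.symm i) (e.symm j)
    simpa [Matrix.reindex_apply] using this.symm
  have hGa : G8a (m+1) = Matrix.reindex e e (Matrix.fromBlocks A 0 0 ((2:ℤ) • 1)) := by
    apply key
    rintro (a|a) (b|b)
    · fin_cases a <;> fin_cases b <;>
        simp [G8a, hAdef, Fin.ext_iff, hL, Matrix.vecHead, Matrix.vecTail, - Fin.val_eq_zero_iff]
    · simp [G8a, Fin.ext_iff, hL, hR, - Fin.val_eq_zero_iff]; omega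
    · simp [G8a, Fin.ext_iff, hL, hR, - Fin.val_eq_zero_iff]; omega
    · simp only [Matrix.fromBlocks_apply₂₂, Matrix.smul_apply, Matrix.one_apply, smul_ite,
        smul_zero, G8a, Matrix.of_apply, Fin.ext_iff, hR]
      split_ifs <;> first | rfl | omega
  have hGb : G8b (m+1) = Matrix.reindex e e (Matrix.fromBlocks C 0 0 ((2:ℤ) • 1)) := by
    apply key
    rintro (a|a) (b|b)
    · fin_cases a <;> fin_cases b <;>
        simp [G8b, hCdef, Fin.ext_iff, hL, Matrix.vecHead, Matrix.vecTail, - Fin.val_eq_zero_iff]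
    · simp [G8b, Fin.ext_iff, hL, hR, - Fin.val_eq_zero_iff]; omega
    · simp [G8b, Fin.ext_iff, hL, hR, - Fin.val_eq_zero_iff]; omega
    · simp only [Matrix.fromBlocks_apply₂₂, Matrix.smul_apply, Matrix.one_apply, smul_ite,
        smul_zero, G8b, Matrix.of_apply, Fin.ext_iff, hR]
      split_ifs <;> first | rfl | omega
  refine ⟨Matrix.reindex e e (Matrix.fromBlocks B 0 0 (1 : Matrix (Fin m) (Fin m) ℤ)), ?_, ?_⟩
  · rw [Matrix.det_reindex_self, Matrix.det_fromBlocks_zero₁₂, Matrix.det_one, mul_one]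
    have : B.det = -1 := by
      simp [hBdef, Matrix.det_fin_three, Matrix.vecHead, Matrix.vecTail]
    rw [this]
    exact isUnit_one.neg
  · rw [hGa, hGb]
    have h1 : (Matrix.reindex e e (Matrix.fromBlocks B 0 0 (1 : Matrix (Fin m) (Fin m) ℤ))).transpose
        = Matrix.reindex e e ((Matrix.fromBlocks B 0 0 (1 : Matrix (Fin m) (Fin m) ℤ)).transpose) := by
      simp [Matrix.transpose_reindex]
    rw [h1]
    have hmul : ∀ (X Y : Matrix (Fin 3 ⊕ Fin m) (Fin 3 ⊕ Fin m) ℤ),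
        Matrix.reindex e e X * Matrix.reindex e e Y = Matrix.reindex e e (X * Y) := by
      intro X Y
      simp [Matrix.reindex_apply, Matrix.submatrix_mul_equiv]
    rw [hmul, hmul]
    congr 1
    rw [Matrix.fromBlocks_transpose, Matrix.fromBlocks_multiply, Matrix.fromBlocks_multiply]
    have hB : B.transpose * A * B = C := by
      rw [hAdef, hBdef, hCdef]; decide
    simp [Matrix.mul_smul, hB]
end

section
/- Let 1 ≤ k ≤ 8 with k ≠ 4, let ⟨1⟩^k denote the odd unimodular positive definite lattice ℤ^k with the standard Euclidean form, and let D_k = {x ∈ ℤ^k : x_1 + ... + x_k is even} be its maximal even sublattice. Then every isometry of the lattice U ⊕ D_k extends (via its unique ℚ-linear extension to the rational span) to an isometry of U ⊕ ⟨1⟩^k; consequently the natural restriction homomorphism O(U ⊕ ⟨1⟩^k) → O(U ⊕ D_k) is an isomorphism of groups. -/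
/-- The bilinear form of `U ⊕ ⟨1⟩^k` on `ℚ^(k+2)`, in the coordinates `(c1, c2, x1, …, xk)`. -/
def B9 (k : ℕ) (x y : Fin (k+2) → ℚ) : ℚ :=
  -(x 0 * y 1 + x 1 * y 0) + ∑ i : Fin k, x i.succ.succ * y i.succ.succ

/-- The lattice `U ⊕ ⟨1⟩^k = ℤ^(k+2) ⊂ ℚ^(k+2)`. -/
def L1 (k : ℕ) : Set (Fin (k+2) → ℚ) := {x | ∀ i, ∃ m : ℤ, x i = m}

/-- The lattice `U ⊕ D_k ⊂ ℚ^(k+2)`: integral vectors whose last `k` coordinates have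
even sum. -/
def L2 (k : ℕ) : Set (Fin (k+2) → ℚ) :=
  {x | (∀ i, ∃ m : ℤ, x i = m) ∧ ∃ m : ℤ, ∑ i : Fin k, x i.succ.succ = 2 * m}



namespace Stmt9Aux

variable {k : ℕ}

lemma succ_succ_ne_zero (i : Fin k) : (i.succ.succ : Fin (k+2)) ≠ 0 := Fin.succ_ne_zero _

lemma succ_succ_ne_one (i : Fin k) : (i.succ.succ : Fin (k+2)) ≠ 1 := by
  intro h
  rw [← Fin.succ_zero_eq_one] at h
  exact Fin.succ_ne_zero i (Fin.succ_injective _ h)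

lemma e0_mem : (Pi.single 0 1 : Fin (k+2) → ℚ) ∈ L2 k := by
  constructor
  · intro i
    by_cases h : i = 0
    · exact ⟨1, by subst h; simp⟩
    · exact ⟨0, by simp [Pi.single_eq_of_ne h]⟩
  · exact ⟨0, by simp [Pi.single_eq_of_ne (succ_succ_ne_zero _)]⟩

lemma e1_mem : (Pi.single 1 1 : Fin (k+2) → ℚ) ∈ L2 k := by
  constructor
  · intro i
    by_cases h : i = 1
    · exact ⟨1, by subst h; simp⟩
    · exact ⟨0, by simp [Pi.single_eq_of_ne h]⟩
  · exact ⟨0, by simp [Pi.single_eq_of_ne (succ_succ_ne_one _)]⟩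

lemma B9_single0 (x : Fin (k+2) → ℚ) : B9 k x (Pi.single 0 1) = -(x 1) := by
  simp [B9, Pi.single_apply, succ_succ_ne_zero]

lemma B9_single1 (x : Fin (k+2) → ℚ) : B9 k x (Pi.single 1 1) = -(x 0) := by
  simp [B9, Pi.single_apply, succ_succ_ne_one]

def pvec (i j : Fin k) : Fin (k+2) → ℚ :=
  fun m => (if m = i.succ.succ then 1 else 0) + (if m = j.succ.succ then 1 else 0)

lemma pvec_mem (i j : Fin k) (hij : i ≠ j) : pvec i j ∈ L2 k := by
  constructor
  · intro m
    refine ⟨(if m = i.succ.succ then 1 else 0) + (if m = j.succ.succ then 1 else 0), ?_⟩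
    unfold pvec
    split_ifs <;> norm_num
  · refine ⟨1, ?_⟩
    unfold pvec
    have hne : i.succ.succ ≠ j.succ.succ := by
      simp [Fin.succ_inj, hij]
    rw [Finset.sum_add_distrib]
    simp [Fin.succ_inj, Finset.sum_ite_eq']
    norm_num

lemma B9_pvec (x : Fin (k+2) → ℚ) (i j : Fin k) :
    B9 k x (pvec i j) = x i.succ.succ + x j.succ.succ := by
  have h0i : ¬((0:Fin (k+2)) = i.succ.succ) := fun h => succ_succ_ne_zero i h.symm
  have h0j : ¬((0:Fin (k+2)) = j.succ.succ) := fun h => succ_succ_ne_zero j h.symm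
  have h1i : ¬((1:Fin (k+2)) = i.succ.succ) := fun h => succ_succ_ne_one i h.symm
  have h1j : ¬((1:Fin (k+2)) = j.succ.succ) := fun h => succ_succ_ne_one j h.symm
  unfold B9 pvec
  simp only [h0i, h0j, h1i, h1j, if_neg, mul_add, mul_ite, mul_one, mul_zero]
  rw [Finset.sum_add_distrib]
  simp [Fin.succ_inj, Finset.sum_ite_eq']

end Stmt9Aux

namespace Stmt9Aux

variable {k : ℕ}

/-- The set of "glue" vectors: half-integral vectors pairing integrally with `L2`
with odd self-pairing. -/
def S (k : ℕ) : Set (Fin (k+2) → ℚ) :=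
  {x | (fun i => 2 * x i) ∈ L2 k ∧ (∀ y ∈ L2 k, ∃ m : ℤ, B9 k x y = (m : ℚ)) ∧
       ∃ m : ℤ, B9 k x x = 2 * (m : ℚ) + 1}

lemma sq_sub_even (n : ℤ) : Even (n * n - n) := by
  have h := Int.even_mul_succ_self (n - 1)
  have : (n - 1) * (n - 1 + 1) = n * n - n := by ring
  rwa [this] at h

lemma even_sum_sq_iff (n : Fin k → ℤ) :
    Even (∑ i, n i * n i) ↔ Even (∑ i, n i) := by
  have h : Even ((∑ i, n i * n i) - ∑ i, n i) := by
    rw [← Finset.sum_sub_distrib, even_iff_two_dvd]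
    exact Finset.dvd_sum fun i _ => (sq_sub_even (n i)).two_dvd
  exact Int.even_sub.mp h

lemma B9_int (x y : Fin (k+2) → ℚ) (n p : Fin (k+2) → ℤ)
    (hx : ∀ i, x i = (n i : ℚ)) (hy : ∀ i, y i = (p i : ℚ)) :
    B9 k x y =
      ((-(n 0 * p 1 + n 1 * p 0) + ∑ i : Fin k, n i.succ.succ * p i.succ.succ : ℤ) : ℚ) := by
  simp only [B9, hx, hy]
  push_cast
  ring

lemma L2_char : L2 k = {x | x ∈ L1 k ∧ ∃ m : ℤ, B9 k x x = 2 * (m : ℚ)} := by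
  ext x
  constructor
  · rintro ⟨hx1, m, hm⟩
    refine ⟨hx1, ?_⟩
    choose n hn using hx1
    have hsum : (∑ i : Fin k, n i.succ.succ) = 2 * m := by
      simp only [hn] at hm
      exact_mod_cast hm
    have hev : Even (∑ i : Fin k, n i.succ.succ * n i.succ.succ) :=
      (even_sum_sq_iff _).mpr ⟨m, by omega⟩
    obtain ⟨c, hc⟩ := hev
    refine ⟨-(n 0 * n 1) + c, ?_⟩
    rw [B9_int x x n n hn hn]
    have : (-(n 0 * n 1 + n 1 * n 0) + ∑ i : Fin k, n i.succ.succ * n i.succ.succ)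
        = 2 * (-(n 0 * n 1) + c) := by rw [hc]; ring
    rw [this]
    push_cast
    ring
  · rintro ⟨hx1, m, hm⟩
    refine ⟨hx1, ?_⟩
    choose n hn using hx1
    rw [B9_int x x n n hn hn] at hm
    have hZ : (-(n 0 * n 1 + n 1 * n 0) + ∑ i : Fin k, n i.succ.succ * n i.succ.succ)
        = 2 * m := by exact_mod_cast hm
    have hev : Even (∑ i : Fin k, n i.succ.succ * n i.succ.succ) := by
      have hcomm : n 1 * n 0 = n 0 * n 1 := mul_comm _ _
      refine ⟨m + n 0 * n 1, by omega⟩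
    obtain ⟨c, hc⟩ := (even_sum_sq_iff _).mp hev
    refine ⟨c, ?_⟩
    have : (∑ i : Fin k, x i.succ.succ) = ((∑ i : Fin k, n i.succ.succ : ℤ) : ℚ) := by
      push_cast
      exact Finset.sum_congr rfl fun i _ => hn _
    rw [this, hc]
    push_cast
    ring

end Stmt9Aux

namespace Stmt9Aux

variable {k : ℕ}

lemma S_subset_L1 (hk1 : 1 ≤ k) (hk8 : k ≤ 8) (hk4 : k ≠ 4) : S k ⊆ L1 k := by
  rintro x ⟨h2, hpair, m, hm⟩
  choose t ht0 using h2.1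
  have ht : ∀ i, 2 * x i = (t i : ℚ) := fun i => ht0 i
  obtain ⟨a0, ha0⟩ := hpair (Pi.single 1 1) e1_mem
  rw [B9_single1] at ha0
  obtain ⟨b0, hb0⟩ := hpair (Pi.single 0 1) e0_mem
  rw [B9_single0] at hb0
  obtain ⟨a, hx0⟩ : ∃ a : ℤ, x 0 = (a : ℚ) := ⟨-a0, by push_cast; linarith⟩
  obtain ⟨b, hx1⟩ : ∃ b : ℤ, x 1 = (b : ℚ) := ⟨-b0, by push_cast; linarith⟩
  by_cases hall : ∀ i : Fin k, Even (t i.succ.succ)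
  · intro j
    refine Fin.cases ?_ (fun j1 => Fin.cases ?_ (fun l => ?_) j1) j
    · exact ⟨a, hx0⟩
    · rw [Fin.succ_zero_eq_one]; exact ⟨b, hx1⟩
    · obtain ⟨c, hc⟩ := hall l
      refine ⟨c, ?_⟩
      have h2x := ht l.succ.succ
      rw [hc] at h2x
      push_cast at h2x
      linarith
  · exfalso
    push_neg at hall
    obtain ⟨i0, hi0⟩ := hall
    rw [Int.even_iff] at hi0
    have hodd : ∀ j : Fin k, Odd (t j.succ.succ) := by
      intro j
      by_cases hji : j = i0
      · subst hji; rw [Int.odd_iff]; omega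
      · obtain ⟨c, hc⟩ := hpair (pvec i0 j) (pvec_mem _ _ (fun h => hji h.symm))
        rw [B9_pvec] at hc
        have hq : ((t i0.succ.succ : ℚ) + t j.succ.succ) = 2 * c := by
          rw [← ht, ← ht]; linarith
        have hZ : t i0.succ.succ + t j.succ.succ = 2 * c := by exact_mod_cast hq
        rw [Int.odd_iff]; omega
    have hsq : ∀ j : Fin k, ∃ c : ℤ,
        t j.succ.succ * t j.succ.succ = 8 * c + 1 := by
      intro j
      obtain ⟨s, hs⟩ := hodd j
      obtain ⟨c, hc⟩ := Int.even_mul_succ_self s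
      exact ⟨c, by rw [hs]; linear_combination 4 * hc⟩
    choose c hc using hsq
    have hsum : (∑ j : Fin k, t j.succ.succ * t j.succ.succ)
        = 8 * (∑ j, c j) + k := by
      rw [Finset.sum_congr rfl fun j _ => hc j]
      rw [Finset.sum_add_distrib, ← Finset.mul_sum]
      simp [Finset.card_univ]
    have hterm : ∀ j : Fin k, (4:ℚ) * (x j.succ.succ * x j.succ.succ)
        = (t j.succ.succ : ℚ) * t j.succ.succ := by
      intro j
      rw [← ht j.succ.succ]; ring
    have h4 : -(8 * ((a:ℚ) * b)) + ∑ j : Fin k, ((t j.succ.succ : ℚ) * t j.succ.succ)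
        = 4 * (2 * (m:ℚ) + 1) := by
      rw [← hm]
      simp only [B9, hx0, hx1]
      rw [mul_add, Finset.mul_sum, ← Finset.sum_congr rfl fun j _ => hterm j]
      ring
    have hq8 : ((-(8 * (a * b)) + ∑ j : Fin k, t j.succ.succ * t j.succ.succ : ℤ) : ℚ)
        = ((8 * m + 4 : ℤ) : ℚ) := by
      push_cast
      linarith [h4]
    have hZ8 : -(8 * (a * b)) + (∑ j : Fin k, t j.succ.succ * t j.succ.succ) = 8 * m + 4 := by
      exact_mod_cast hq8
    rw [hsum] at hZ8
    have hk' : (k:ℤ) = 8 * (m + a * b - ∑ j, c j) + 4 := by linarith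
    set d : ℤ := m + a * b - ∑ j, c j with hd
    omega

end Stmt9Aux

namespace Stmt9Aux

variable {k : ℕ}

lemma L1_char (hk1 : 1 ≤ k) (hk8 : k ≤ 8) (hk4 : k ≠ 4) : L1 k = L2 k ∪ S k := by
  apply Set.Subset.antisymm
  · intro x hx
    choose n hn using hx
    have hxs : ∑ i : Fin k, x i.succ.succ = ((∑ i : Fin k, n i.succ.succ : ℤ) : ℚ) := by
      push_cast
      exact Finset.sum_congr rfl fun i _ => hn _
    by_cases he : Even (∑ i : Fin k, n i.succ.succ)
    · obtain ⟨c, hc⟩ := he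
      exact Or.inl ⟨fun i => ⟨n i, hn i⟩, c, by rw [hxs, hc]; push_cast; ring⟩
    · refine Or.inr ⟨⟨fun i => ⟨2 * n i, by show 2 * x i = _; rw [hn i]; push_cast; ring⟩, ?_⟩, ?_, ?_⟩
      · refine ⟨∑ i : Fin k, n i.succ.succ, ?_⟩
        show ∑ i : Fin k, 2 * x i.succ.succ = _
        rw [← Finset.mul_sum, hxs]
      · intro y hy
        choose p hp using hy.1
        exact ⟨_, B9_int x y n p hn hp⟩
      · have ho2 : Odd (∑ i : Fin k, n i.succ.succ * n i.succ.succ) := by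
          rw [← Int.not_even_iff_odd]
          intro hcontra
          exact he ((even_sum_sq_iff _).mp hcontra)
        obtain ⟨c2, hc2⟩ := ho2
        refine ⟨-(n 0 * n 1) + c2, ?_⟩
        rw [B9_int x x n n hn hn]
        have heq : (-(n 0 * n 1 + n 1 * n 0) + ∑ i : Fin k, n i.succ.succ * n i.succ.succ)
            = 2 * (-(n 0 * n 1) + c2) + 1 := by rw [hc2]; ring
        rw [heq]
        push_cast
        ring
  · rintro x (hx | hx)
    · exact hx.1
    · exact S_subset_L1 hk1 hk8 hk4 hx

end Stmt9Aux

namespace Stmt9Aux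

variable {k : ℕ}

lemma S_map (f : (Fin (k+2) → ℚ) ≃ₗ[ℚ] (Fin (k+2) → ℚ))
    (hf : ∀ x y, B9 k (f x) (f y) = B9 k x y)
    (hfL2 : ∀ x, x ∈ L2 k ↔ f x ∈ L2 k) :
    ∀ x ∈ S k, f x ∈ S k := by
  rintro x ⟨h2, hpair, m, hm⟩
  refine ⟨?_, ?_, m, by rw [hf x x]; exact hm⟩
  · have heq : (fun i => 2 * (f x) i) = f (fun i => 2 * x i) := by
      have h2x : (fun i => 2 * x i) = (2:ℚ) • x := by
        funext i; simp [Pi.smul_apply, smul_eq_mul]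
      rw [h2x, map_smul]
      funext i; simp [Pi.smul_apply, smul_eq_mul]
    rw [heq]
    exact (hfL2 _).mp h2
  · intro y hy
    have hy' : f.symm y ∈ L2 k := by
      rw [hfL2 (f.symm y), LinearEquiv.apply_symm_apply]
      exact hy
    obtain ⟨m', hm'⟩ := hpair (f.symm y) hy'
    refine ⟨m', ?_⟩
    have hxy := hf x (f.symm y)
    rw [LinearEquiv.apply_symm_apply] at hxy
    rw [hxy]
    exact hm'

end Stmt9Aux


open Stmt9Aux

/-- For `1 ≤ k ≤ 8`, `k ≠ 4`: a form-preserving linear automorphism of the ambient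
rational quadratic space preserves `U ⊕ D_k` if and only if it preserves `U ⊕ ⟨1⟩^k`;
i.e. every isometry of `U ⊕ D_k` extends (via its unique `ℚ`-linear extension) to an
isometry of `U ⊕ ⟨1⟩^k`, and the restriction map `O(U ⊕ ⟨1⟩^k) → O(U ⊕ D_k)` is an
isomorphism of groups. -/
theorem stmt9 (k : ℕ) (hk1 : 1 ≤ k) (hk8 : k ≤ 8) (hk4 : k ≠ 4)
    (f : (Fin (k+2) → ℚ) ≃ₗ[ℚ] (Fin (k+2) → ℚ))
    (hf : ∀ x y, B9 k (f x) (f y) = B9 k x y) :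
    ⇑f '' L2 k = L2 k ↔ ⇑f '' L1 k = L1 k := by
  have hinj : Function.Injective f := f.injective
  constructor
  · intro h
    have hL2 : ∀ x, x ∈ L2 k ↔ f x ∈ L2 k := by
      intro x
      constructor
      · intro hx
        have : f x ∈ ⇑f '' L2 k := Set.mem_image_of_mem _ hx
        rwa [h] at this
      · intro hx
        rw [← h] at hx
        exact hinj.mem_set_image.mp hx
    have hL2s : ∀ x, x ∈ L2 k ↔ f.symm x ∈ L2 k := by
      intro x
      rw [hL2 (f.symm x), LinearEquiv.apply_symm_apply]
    have hf' : ∀ x y, B9 k (f.symm x) (f.symm y) = B9 k x y := by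
      intro x y
      have h0 := hf (f.symm x) (f.symm y)
      rw [LinearEquiv.apply_symm_apply, LinearEquiv.apply_symm_apply] at h0
      exact h0.symm
    have hS : ∀ x ∈ S k, f x ∈ S k := S_map f hf hL2
    have hS' : ∀ x ∈ S k, f.symm x ∈ S k := S_map f.symm hf' hL2s
    rw [L1_char hk1 hk8 hk4, Set.image_union, h]
    congr 1
    apply Set.Subset.antisymm
    · rintro _ ⟨x, hx, rfl⟩
      exact hS x hx
    · intro x hx
      exact ⟨f.symm x, hS' x hx, by simp⟩
  · intro h
    have hL1 : ∀ x, x ∈ L1 k ↔ f x ∈ L1 k := by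
      intro x
      constructor
      · intro hx
        have : f x ∈ ⇑f '' L1 k := Set.mem_image_of_mem _ hx
        rwa [h] at this
      · intro hx
        rw [← h] at hx
        exact hinj.mem_set_image.mp hx
    apply Set.Subset.antisymm
    · rintro _ ⟨x, hx, rfl⟩
      rw [L2_char] at hx ⊢
      obtain ⟨hx1, m, hm⟩ := hx
      exact ⟨(hL1 x).mp hx1, m, by rw [hf x x]; exact hm⟩
    · intro x hx
      refine ⟨f.symm x, ?_, by simp⟩
      rw [L2_char] at hx ⊢
      obtain ⟨hx1, m, hm⟩ := hx
      have hfs : B9 k (f.symm x) (f.symm x) = B9 k x x := by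
        have h0 := hf (f.symm x) (f.symm x)
        rw [LinearEquiv.apply_symm_apply] at h0
        exact h0.symm
      refine ⟨?_, m, by rw [hfs]; exact hm⟩
      have h1 := hL1 (f.symm x)
      rw [LinearEquiv.apply_symm_apply] at h1
      exact h1.mpr hx1
end

section
/- Let N_8 be the lattice generated by vectors a1,...,a8 with (a_i,a_j) = 2δ_ij together with h = (a1 + ... + a8)/2, and let D_8 = {x ∈ ℤ^8 : x_1 + ... + x_8 even} with the standard Euclidean form. Then N_8 is an even positive definite lattice of rank 8 and determinant 2^6, and N_8 is isometric to D_8*(2), the dual lattice of D_8 equipped with the Euclidean form multiplied by 2. -/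
/-- The Euclidean pairing on `ℚ^8`. -/
def dot8 (x y : Fin 8 → ℚ) : ℚ := ∑ i, x i * y i

/-- The generators `a_i` of `N₈`: with the form `(x,y) = 2·dot₈ x y`, the `a_i` are
the standard basis vectors, so `(a_i, a_j) = 2δ_ij`. -/
def av (i : Fin 8) : Fin 8 → ℚ := fun j => if j = i then 1 else 0

/-- `h = (a1 + … + a8)/2`. -/
def hv : Fin 8 → ℚ := fun _ => 1/2

/-- Nikulin's lattice `N₈ ⊂ ℚ^8`: the `ℤ`-span of `a1, …, a8` and `h`. -/
def N8 : Set (Fin 8 → ℚ) :=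
  (Submodule.span ℤ (Set.range av ∪ {hv}) : Submodule ℤ (Fin 8 → ℚ))

/-- `D₈ ⊂ ℚ^8` with the standard Euclidean form: integer vectors with even sum. -/
def D8 : Set (Fin 8 → ℚ) :=
  {x | (∀ i, ∃ k : ℤ, x i = k) ∧ ∃ m : ℤ, ∑ i, x i = 2 * m}

/-- The dual lattice `D₈* ⊂ ℚ^8` (with respect to the Euclidean form). -/
def D8dual : Set (Fin 8 → ℚ) := {x | ∀ v ∈ D8, ∃ k : ℤ, dot8 x v = k}

lemma mem_N8_iff (x : Fin 8 → ℚ) :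
    x ∈ N8 ↔ ∃ (m : ℤ) (c : Fin 8 → ℤ), ∀ i, x i = c i + m / 2 := by
  constructor
  · intro hx
    have hx' : x ∈ Submodule.span ℤ (Set.range av ∪ {hv}) := hx
    clear hx
    induction hx' using Submodule.span_induction with
    | mem y hy =>
      rcases hy with ⟨i, rfl⟩ | rfl
      · exact ⟨0, fun j => if j = i then 1 else 0, fun j => by
          simp only [av]; split <;> simp⟩
      · exact ⟨1, 0, fun j => by simp [hv]⟩
    | zero => exact ⟨0, 0, fun i => by simp⟩
    | add y z _ _ hy hz =>
      obtain ⟨m, c, h1⟩ := hy; obtain ⟨m', c', h2⟩ := hz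
      exact ⟨m + m', c + c', fun i => by
        simp only [Pi.add_apply, h1 i, h2 i]; push_cast; ring⟩
    | smul a y _ hy =>
      obtain ⟨m, c, h1⟩ := hy
      exact ⟨a * m, a • c, fun i => by
        simp only [Pi.smul_apply, h1 i, smul_eq_mul, zsmul_eq_mul]; push_cast; ring⟩
  · rintro ⟨m, c, hc⟩
    have hx : x = (∑ i, c i • av i) + m • hv := by
      funext j
      simp only [Pi.add_apply, Finset.sum_apply, Pi.smul_apply, av, hv,
        zsmul_eq_mul]
      rw [Finset.sum_congr rfl (fun i _ => by
        show (c i : ℚ) * (if j = i then 1 else 0) = if j = i then (c i : ℚ) else 0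
        split <;> ring)]
      rw [Finset.sum_ite_eq]
      simp only [hv, Pi.mul_apply, Pi.intCast_apply, Finset.mem_univ, if_true]
      rw [hc j]
      ring
    rw [show x ∈ N8 ↔ x ∈ Submodule.span ℤ (Set.range av ∪ {hv}) from Iff.rfl, hx]
    refine Submodule.add_mem _
      (Submodule.sum_mem _ fun i _ => Submodule.smul_mem _ _ ?_)
      (Submodule.smul_mem _ _ ?_)
    · exact Submodule.subset_span (Or.inl ⟨i, rfl⟩)
    · exact Submodule.subset_span (Or.inr rfl)

lemma N8_eq_D8dual : N8 = D8dual := by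
  ext x
  constructor
  · intro hx
    obtain ⟨m, c, hc⟩ := (mem_N8_iff x).1 hx
    rintro w ⟨hw1, t, hw2⟩
    choose k hk using hw1
    refine ⟨(∑ i, c i * k i) + m * t, ?_⟩
    have hsum : (k 0 : ℚ) + k 1 + k 2 + k 3 + k 4 + k 5 + k 6 + k 7 = 2 * t := by
      rw [Fin.sum_univ_eight] at hw2
      simp only [hk] at hw2
      linarith [hw2]
    simp only [dot8, Fin.sum_univ_eight, hc, hk]
    push_cast
    linear_combination ((m : ℚ) / 2) * hsum
  · intro hx
    -- test vectors: w i = e_0 + e_i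
    have hw : ∀ i : Fin 8, (fun j => (if j = (0:Fin 8) then (1:ℚ) else 0) +
        (if j = i then 1 else 0)) ∈ D8 := by
      intro i
      constructor
      · intro j
        exact ⟨(if j = 0 then 1 else 0) + (if j = i then 1 else 0), by push_cast; rfl⟩
      · refine ⟨1, ?_⟩
        rw [Finset.sum_add_distrib]
        simp [Finset.sum_ite_eq']
        norm_num
    choose k hk using fun i => hx _ (hw i)
    have hdot : ∀ i : Fin 8, x 0 + x i = k i := by
      intro i
      have := hk i
      rw [dot8] at this
      rw [← this]
      rw [Finset.sum_congr rfl (fun j _ => mul_add (x j) _ _), Finset.sum_add_distrib]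
      congr 1
      · rw [Finset.sum_congr rfl (fun j _ => by
          show x j * (if j = 0 then 1 else 0) = if j = 0 then x j else 0
          split <;> ring), Finset.sum_ite_eq']
        simp
      · rw [Finset.sum_congr rfl (fun j _ => by
          show x j * (if j = i then 1 else 0) = if j = i then x j else 0
          split <;> ring), Finset.sum_ite_eq']
        simp
    have hx0 : x 0 = (k 0 : ℚ) / 2 := by
      have := hdot 0; linarith
    refine (mem_N8_iff x).2 ⟨k 0, fun i => k i - k 0, fun i => ?_⟩
    have := hdot i
    push_cast
    linarith

/-- The chosen basis of `N₈`. -/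
def bvec : Fin 8 → Fin 8 → ℚ := fun i => if i = 7 then hv else av i

lemma span_bvec : Submodule.span ℤ (Set.range bvec) =
    Submodule.span ℤ (Set.range av ∪ {hv}) := by
  apply le_antisymm
  · rw [Submodule.span_le]
    rintro _ ⟨i, rfl⟩
    by_cases h : i = 7
    · simp only [bvec, h, if_pos rfl]
      exact Submodule.subset_span (Or.inr rfl)
    · simp only [bvec, if_neg h]
      exact Submodule.subset_span (Or.inl ⟨i, rfl⟩)
  · rw [Submodule.span_le]
    rintro _ (⟨i, rfl⟩ | rfl)
    · by_cases h : i = 7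
      · subst h
        have h7' : bvec 7 = hv := if_pos rfl
        have e0 : bvec 0 = av 0 := if_neg (by decide)
        have e1 : bvec 1 = av 1 := if_neg (by decide)
        have e2 : bvec 2 = av 2 := if_neg (by decide)
        have e3 : bvec 3 = av 3 := if_neg (by decide)
        have e4 : bvec 4 = av 4 := if_neg (by decide)
        have e5 : bvec 5 = av 5 := if_neg (by decide)
        have e6 : bvec 6 = av 6 := if_neg (by decide)
        have hexp : av 7 = (2:ℤ) • bvec 7 - (bvec 0 + bvec 1 + bvec 2 + bvec 3 +
            bvec 4 + bvec 5 + bvec 6) := by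
          rw [h7', e0, e1, e2, e3, e4, e5, e6]
          funext j
          fin_cases j <;> norm_num (config := { decide := true }) [av, hv]
        rw [SetLike.mem_coe, hexp]
        have hm : ∀ i : Fin 8, bvec i ∈ Submodule.span ℤ (Set.range bvec) :=
          fun i => Submodule.subset_span ⟨i, rfl⟩
        exact Submodule.sub_mem _ (Submodule.smul_mem _ _ (hm 7))
          (Submodule.add_mem _ (Submodule.add_mem _ (Submodule.add_mem _
            (Submodule.add_mem _ (Submodule.add_mem _ (Submodule.add_mem _
              (hm 0) (hm 1)) (hm 2)) (hm 3)) (hm 4)) (hm 5)) (hm 6))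
      · have : av i = bvec i := by simp [bvec, h]
        rw [SetLike.mem_coe, this]
        exact Submodule.subset_span ⟨i, rfl⟩
    · have : hv = bvec 7 := by simp [bvec]
      rw [SetLike.mem_coe, this]
      exact Submodule.subset_span ⟨7, rfl⟩

lemma detaux {R : Type} [CommRing R] (A B G : Matrix (Fin 8) (Fin 8) R)
    (hG : G = A * B.transpose) (h : A.det * B.det = 64) : G.det = 64 := by
  rw [hG, Matrix.det_mul, Matrix.det_transpose]
  exact h

/-- `N₈` (with the form `2·dot₈`) is an even positive definite lattice of rank 8 and
determinant `2^6 = 64`, and it is isometric to `D₈*(2)`, i.e. `D₈*` with the Euclidean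
form multiplied by `2`. -/
theorem stmt10 :
    (∀ v ∈ N8, ∃ n : ℤ, 2 * dot8 v v = 2 * n) ∧
    (∀ v ∈ N8, v ≠ 0 → 0 < 2 * dot8 v v) ∧
    (∃ b : Fin 8 → (Fin 8 → ℚ),
      (Submodule.span ℤ (Set.range b) : Set (Fin 8 → ℚ)) = N8 ∧
      Matrix.det (Matrix.of fun i j => 2 * dot8 (b i) (b j)) = 64) ∧
    (∃ f : (Fin 8 → ℚ) ≃ₗ[ℚ] (Fin 8 → ℚ),
      ⇑f '' N8 = D8dual ∧ ∀ x y, 2 * dot8 (f x) (f y) = 2 * dot8 x y) := by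
  refine ⟨?_, ?_, ?_, ?_⟩
  · -- even
    intro v hv'
    obtain ⟨m, c, hc⟩ := (mem_N8_iff v).1 hv'
    refine ⟨(∑ i, c i * c i) + m * (∑ i, c i) + 2 * m ^ 2, ?_⟩
    simp only [dot8, Fin.sum_univ_eight, hc]
    push_cast
    ring
  · -- positive definite
    intro v _ hv0
    have hnn : 0 ≤ dot8 v v := Finset.sum_nonneg fun i _ => mul_self_nonneg _
    have hne : dot8 v v ≠ 0 := by
      intro h0
      apply hv0
      funext i
      have := (Finset.sum_eq_zero_iff_of_nonneg
        (fun i _ => mul_self_nonneg (v i))).1 h0 i (Finset.mem_univ i)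
      exact mul_self_eq_zero.1 this
    have : 0 < dot8 v v := lt_of_le_of_ne hnn (Ne.symm hne)
    linarith
  · -- basis and determinant
    refine ⟨bvec, ?_, ?_⟩
    · rw [N8, span_bvec]
    · have hG : (Matrix.of fun i j => 2 * dot8 (bvec i) (bvec j)) =
          (Matrix.of fun i j => 2 * bvec i j) *
            (Matrix.of fun i j => bvec i j).transpose := by
        ext i j
        simp only [Matrix.of_apply, Matrix.mul_apply, Matrix.transpose_apply,
          dot8, Finset.mul_sum]
        exact Finset.sum_congr rfl fun k _ => by ring
      have hzero : ∀ i j : Fin 8, i < j → bvec i j = 0 := by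
        intro i j hij'
        simp only [bvec]
        have h7 : i ≠ 7 := by
          intro h
          subst h
          exact absurd hij' (by rw [Fin.lt_def]; omega)
        rw [if_neg h7]
        simp only [av]
        rw [if_neg (by rintro rfl; exact lt_irrefl _ hij')]
      have hB : (Matrix.of fun i j => bvec i j).det = 1 / 2 := by
        rw [Matrix.det_of_lowerTriangular (Matrix.of fun i j => bvec i j)
          (fun i j (hij : i < j) => hzero i j hij)]
        rw [Fin.prod_univ_eight]
        norm_num (config := { decide := true }) [bvec, av, hv]
      have hB' : (Matrix.of fun i j => 2 * bvec i j).det = 128 := by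
        rw [Matrix.det_of_lowerTriangular (Matrix.of fun i j => 2 * bvec i j)
          (fun i j (hij : i < j) => by
            show 2 * bvec i j = 0
            rw [hzero i j hij, mul_zero])]
        rw [Fin.prod_univ_eight]
        norm_num (config := { decide := true }) [bvec, av, hv]
      exact detaux _ _ _ hG (by rw [hB', hB]; norm_num)
  · -- isometry
    refine ⟨LinearEquiv.refl ℚ _, ?_, fun x y => rfl⟩
    rw [show ⇑(LinearEquiv.refl ℚ (Fin 8 → ℚ)) = id from funext fun x => rfl, Set.image_id]
    · exact N8_eq_D8dual
end

section
/- Let D_4 = {x ∈ ℤ^4 : x_1 + x_2 + x_3 + x_4 even} with the standard Euclidean form, so its dual lattice is D_4* = ℤ^4 + ℤ·(1/2,1/2,1/2,1/2). The value (y,y) mod 4 is well defined on the quotient group D_4*/2D_4, which has 64 elements, and the numbers of classes with (y,y) ≡ 0, 1, 2, 3 mod 4 are 4, 24, 12, 24 respectively. (Equivalently: the discriminant group of D_4(2) has exactly 4, 24, 12, 24 elements of norm 0, 1/2, 1, 3/2 modulo 2ℤ.) -/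
/-- The Euclidean pairing on `ℚ^4`. -/
def dot4 (x y : Fin 4 → ℚ) : ℚ := ∑ i, x i * y i

/-- `D₄ ⊂ ℚ^4` with the standard Euclidean form: integer vectors with even sum. -/
def D4s : Set (Fin 4 → ℚ) :=
  {x | (∀ i, ∃ k : ℤ, x i = k) ∧ ∃ m : ℤ, ∑ i, x i = 2 * m}

/-- The dual lattice `D₄* ⊂ ℚ^4`. -/
def D4dual : Set (Fin 4 → ℚ) := {x | ∀ v ∈ D4s, ∃ k : ℤ, dot4 x v = k}

/-- The sublattice `2D₄`. -/
def twoD4 : Set (Fin 4 → ℚ) := {x | ∃ w ∈ D4s, x = (2 : ℚ) • w}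

/-- The coset relation on `D₄*` modulo `2D₄` (whose quotient is `D₄*/2D₄`). -/
def r12 (x y : D4dual) : Prop := (x : Fin 4 → ℚ) - (y : Fin 4 → ℚ) ∈ twoD4

namespace Aux12

abbrev T4 := (Fin 4 → ZMod 4) × ZMod 8

def Phi (u : Fin 4 → ℤ) : T4 :=
  (fun i => (u i : ZMod 4), ((∑ i, u i : ℤ) : ZMod 8))

def dval (p : T4) : ℕ := (p.2.val + 32 - (∑ i, (p.1 i).val) % 8) % 8

def Uof (p : T4) : Fin 4 → ℤ :=
  fun i => if i = 0 then ((p.1 0).val : ℤ) + dval p else ((p.1 i).val : ℤ)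

def repQ (p : T4) : Fin 4 → ℚ := fun i => (Uof p i : ℚ) / 2

def Pim (p : T4) : Prop :=
  (∀ i, (p.1 i).val % 2 = (p.1 0).val % 2) ∧ p.2.val % 4 = (∑ i, (p.1 i).val) % 4

instance : DecidablePred Pim := fun p => by unfold Pim; infer_instance

def Nrm (p : T4) : ZMod 16 := ((∑ i, (Uof p i)^2 : ℤ) : ZMod 16)

lemma mem_D4s_single2 (i : Fin 4) : (fun j => if j = i then (2:ℚ) else 0) ∈ D4s := by
  refine ⟨fun j => ?_, 1, ?_⟩
  · by_cases h : j = i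
    · exact ⟨2, by simp [h]⟩
    · exact ⟨0, by simp [h]⟩
  · simp

lemma mem_D4s_pair (i : Fin 4) (h : i ≠ 0) :
    (fun j => if j = 0 ∨ j = i then (1:ℚ) else 0) ∈ D4s := by
  refine ⟨fun j => ?_, 1, ?_⟩
  · by_cases hj : j = 0 ∨ j = i
    · exact ⟨1, by simp [hj]⟩
    · exact ⟨0, by simp [hj]⟩
  · fin_cases i <;> simp_all [Fin.sum_univ_four] <;> decide

lemma dual_eq : D4dual =
    {x : Fin 4 → ℚ | (∀ i, ∃ k : ℤ, x i = (k : ℚ)) ∨ (∀ i, ∃ k : ℤ, x i = (k : ℚ) + 1/2)} := by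
  ext x
  constructor
  · intro hx
    have h2 : ∀ i, ∃ a : ℤ, 2 * x i = a := by
      intro i
      obtain ⟨k, hk⟩ := hx _ (mem_D4s_single2 i)
      refine ⟨k, ?_⟩
      rw [← hk]
      simp [dot4, mul_ite, mul_comm]
    choose a ha using h2
    have hpar : ∀ i, a i % 2 = a 0 % 2 := by
      intro i
      rcases eq_or_ne i 0 with h | h
      · rw [h]
      obtain ⟨b, hb⟩ := hx _ (mem_D4s_pair i h)
      have hsum : ((a 0 : ℚ)) + a i = 2 * b := by
        rw [← ha 0, ← ha i]
        have : x 0 + x i = (b : ℚ) := by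
          rw [← hb]
          unfold dot4
          fin_cases i <;> simp_all [Fin.sum_univ_four]
        linarith
      have : a 0 + a i = 2 * b := by exact_mod_cast hsum
      omega
    rcases Int.even_or_odd (a 0) with he | ho
    · left
      intro i
      have h2 : a i % 2 = 0 := by
        obtain ⟨r, hr⟩ := he; have := hpar i; omega
      obtain ⟨c, hc⟩ : ∃ c, a i = 2 * c := ⟨a i / 2, by omega⟩
      refine ⟨c, ?_⟩
      have := ha i
      rw [hc] at this
      push_cast at this
      linarith
    · right
      intro i
      have h2 : a i % 2 = 1 := by
        obtain ⟨r, hr⟩ := ho; have := hpar i; omega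
      obtain ⟨c, hc⟩ : ∃ c, a i = 2 * c + 1 := ⟨a i / 2, by omega⟩
      refine ⟨c, ?_⟩
      have := ha i
      rw [hc] at this
      push_cast at this
      linarith
  · intro hx v hv
    obtain ⟨hint, m, hm⟩ := hv
    choose n hn using hint
    rcases hx with h | h
    · choose k hk using h
      refine ⟨∑ i, k i * n i, ?_⟩
      unfold dot4
      simp only [hk, hn]
      push_cast
      ring
    · choose k hk using h
      refine ⟨(∑ i, k i * n i) + m, ?_⟩
      unfold dot4
      simp only [Fin.sum_univ_four] at hm ⊢
      simp only [hk, hn] at hm ⊢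
      push_cast at hm ⊢
      linear_combination hm / 2

lemma normdiff : ∀ x ∈ D4dual, ∀ y ∈ D4dual, x - y ∈ twoD4 →
    ∃ m : ℤ, dot4 x x - dot4 y y = 4 * m := by
  intro x _ y hy ⟨w, hw, hxy⟩
  obtain ⟨k, hky⟩ := hy w hw
  obtain ⟨hint, m, hm⟩ := hw
  choose n hn using hint
  refine ⟨(∑ i, n i * n i) + k, ?_⟩
  have hx' : ∀ i, x i = y i + 2 * w i := by
    intro i
    have := congrFun hxy i
    simp only [Pi.sub_apply, Pi.smul_apply, smul_eq_mul] at this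
    linarith
  unfold dot4 at *
  simp only [Fin.sum_univ_four] at *
  rw [hx' 0, hx' 1, hx' 2, hx' 3]
  simp only [hn] at hky ⊢
  push_cast
  linear_combination (4:ℚ) * hky

end Aux12
namespace Aux12

lemma lift_exists (x : Fin 4 → ℚ) (hx : x ∈ D4dual) :
    ∃ u : Fin 4 → ℤ, (∀ i, x i = (u i : ℚ) / 2) ∧ ∀ i, u i % 2 = u 0 % 2 := by
  rw [dual_eq] at hx
  rcases hx with h | h
  · choose k hk using h
    refine ⟨fun i => 2 * k i, fun i => ?_, fun i => ?_⟩
    · rw [hk i]; push_cast; ring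
    · simp [Int.mul_emod_right]
  · choose k hk using h
    refine ⟨fun i => 2 * k i + 1, fun i => ?_, fun i => ?_⟩
    · rw [hk i]; push_cast; ring
    · show (2 * k i + 1) % 2 = (2 * k 0 + 1) % 2
      omega

lemma rel_iff (u v : Fin 4 → ℤ) :
    ((fun i => (u i : ℚ)/2) - (fun i => (v i : ℚ)/2) ∈ twoD4) ↔ Phi u = Phi v := by
  constructor
  · rintro ⟨w, ⟨hint, m, hm⟩, heq⟩
    choose n hn using hint
    have hco : ∀ i, u i - v i = 4 * n i := by
      intro i
      have h := congrFun heq i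
      simp only [Pi.sub_apply, Pi.smul_apply, smul_eq_mul, hn i] at h
      have h2 : ((u i - v i : ℤ) : ℚ) = ((4 * n i : ℤ) : ℚ) := by push_cast; linarith
      exact_mod_cast h2
    have hsn : ∑ i, n i = 2 * m := by
      have h2 : ((∑ i, n i : ℤ) : ℚ) = ((2 * m : ℤ) : ℚ) := by
        push_cast
        rw [← hm]
        exact Finset.sum_congr rfl fun i _ => (hn i).symm
      exact_mod_cast h2
    unfold Phi
    refine Prod.ext (funext fun i => ?_) ?_
    · rw [ZMod.intCast_eq_intCast_iff, Int.modEq_iff_dvd]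
      exact ⟨-n i, by push_cast; linarith [hco i]⟩
    · simp only
      rw [ZMod.intCast_eq_intCast_iff, Int.modEq_iff_dvd]
      refine ⟨-m, ?_⟩
      rw [← Finset.sum_sub_distrib]
      have h3 : ∀ i ∈ Finset.univ, v i - u i = (-4) * n i := fun i _ => by linarith [hco i]
      rw [Finset.sum_congr rfl h3, ← Finset.mul_sum, hsn]
      ring
  · intro hp
    have h1 : ∀ i, ∃ c : ℤ, u i - v i = 4 * c := by
      intro i
      have h := congrFun (congrArg Prod.fst hp) i
      simp only [Phi] at h
      rw [ZMod.intCast_eq_intCast_iff, Int.modEq_iff_dvd] at h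
      obtain ⟨c, hc⟩ := h
      exact ⟨-c, by push_cast at hc; linarith⟩
    choose c hc using h1
    have h2 : ∃ m : ℤ, (∑ i, u i) - ∑ i, v i = 8 * m := by
      have h := congrArg Prod.snd hp
      simp only [Phi] at h
      rw [ZMod.intCast_eq_intCast_iff, Int.modEq_iff_dvd] at h
      obtain ⟨m, hm⟩ := h
      exact ⟨-m, by push_cast at hm; linarith⟩
    obtain ⟨m, hm⟩ := h2
    have hcs : ∑ i, c i = 2 * m := by
      have h4 : ∑ i, (4 * c i) = 8 * m := by
        rw [show (8:ℤ) * m = (∑ i, u i) - ∑ i, v i from hm.symm, ← Finset.sum_sub_distrib]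
        exact Finset.sum_congr rfl fun i _ => (hc i).symm
      rw [← Finset.mul_sum] at h4
      omega
    refine ⟨fun i => (c i : ℚ), ⟨fun i => ⟨c i, rfl⟩, m, ?_⟩, funext fun i => ?_⟩
    · have h5 := congrArg (Int.cast : ℤ → ℚ) hcs
      push_cast at h5
      exact h5
    · simp only [Pi.sub_apply, Pi.smul_apply, smul_eq_mul]
      have h3 : (u i : ℚ) - v i = 4 * c i := by exact_mod_cast congrArg (Int.cast : ℤ → ℚ) (hc i)
      linarith

end Aux12
namespace Aux12

lemma Pim_Phi (u : Fin 4 → ℤ) (hpar : ∀ i, u i % 2 = u 0 % 2) : Pim (Phi u) := by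
  constructor
  · intro i
    have hi := ZMod.val_intCast (n := 4) (u i)
    have h0 := ZMod.val_intCast (n := 4) (u 0)
    have hp := hpar i
    simp only [Phi]
    push_cast at hi h0
    omega
  · simp only [Phi, Fin.sum_univ_four]
    have h8 := ZMod.val_intCast (n := 8) (u 0 + u 1 + u 2 + u 3)
    have h0 := ZMod.val_intCast (n := 4) (u 0)
    have h1 := ZMod.val_intCast (n := 4) (u 1)
    have h2 := ZMod.val_intCast (n := 4) (u 2)
    have h3 := ZMod.val_intCast (n := 4) (u 3)
    push_cast at h8 h0 h1 h2 h3 ⊢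
    omega

lemma dval_facts (p : T4) (hp : Pim p) :
    dval p % 4 = 0 ∧ ((∑ i, (p.1 i).val) + dval p) % 8 = p.2.val % 8 := by
  have hs := ZMod.val_lt p.2
  have h4 := hp.2
  unfold dval
  omega

lemma Phi_Uof (p : T4) (hp : Pim p) : Phi (Uof p) = p := by
  obtain ⟨hd4, hd8⟩ := dval_facts p hp
  unfold Phi Uof
  refine Prod.ext (funext fun i => ?_) ?_
  · by_cases h : i = 0
    · subst h
      simp only [if_pos rfl]
      push_cast
      obtain ⟨t, ht⟩ : ∃ t, dval p = 4 * t := ⟨dval p / 4, by omega⟩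
      rw [ht]
      push_cast
      simp [show (4 : ZMod 4) = 0 by decide, ZMod.natCast_val, ZMod.cast_id]
    · simp only [if_neg h]
      push_cast
      simp [ZMod.natCast_val, ZMod.cast_id]
  · simp only
    have e1 : (∑ i, (if i = 0 then ((p.1 0).val : ℤ) + dval p else ((p.1 i).val : ℤ)))
        = (((∑ i, (p.1 i).val) + dval p : ℕ) : ℤ) := by
      simp [Fin.sum_univ_four]
      push_cast
      ring
    rw [e1, Int.cast_natCast]
    rw [show p.2 = ((p.2.val : ℕ) : ZMod 8) by simp [ZMod.natCast_val, ZMod.cast_id]]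
    rw [ZMod.natCast_eq_natCast_iff]
    exact hd8

lemma Uof_parity (p : T4) (hp : Pim p) : ∀ i, Uof p i % 2 = Uof p 0 % 2 := by
  intro i
  obtain ⟨hd4, _⟩ := dval_facts p hp
  have h := hp.1 i
  unfold Uof
  by_cases hi : i = 0
  · rw [hi]
  · simp only [if_neg hi, if_pos rfl]
    omega

lemma repQ_mem (p : T4) (hp : Pim p) : repQ p ∈ D4dual := by
  rw [dual_eq]
  have hpar := Uof_parity p hp
  rcases Int.even_or_odd (Uof p 0) with he | ho
  · left
    intro i
    obtain ⟨r, hr⟩ := he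
    have h2 : Uof p i % 2 = 0 := by have := hpar i; omega
    obtain ⟨c, hc⟩ : ∃ c, Uof p i = 2 * c := ⟨Uof p i / 2, by omega⟩
    exact ⟨c, by unfold repQ; rw [hc]; push_cast; ring⟩
  · right
    intro i
    obtain ⟨r, hr⟩ := ho
    have h2 : Uof p i % 2 = 1 := by have := hpar i; omega
    obtain ⟨c, hc⟩ : ∃ c, Uof p i = 2 * c + 1 := ⟨Uof p i / 2, by omega⟩
    exact ⟨c, by unfold repQ; rw [hc]; push_cast; ring⟩

end Aux12
namespace Aux12

noncomputable def uOf (x : D4dual) : Fin 4 → ℤ := Classical.choose (lift_exists x.1 x.2)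

lemma uOf_spec₁ (x : D4dual) : ∀ i, x.1 i = (uOf x i : ℚ) / 2 :=
  (Classical.choose_spec (lift_exists x.1 x.2)).1

lemma uOf_spec₂ (x : D4dual) : ∀ i, uOf x i % 2 = uOf x 0 % 2 :=
  (Classical.choose_spec (lift_exists x.1 x.2)).2

lemma xfun (x : D4dual) : (x : Fin 4 → ℚ) = fun i => (uOf x i : ℚ) / 2 :=
  funext (uOf_spec₁ x)

lemma r12_iff (x y : D4dual) : r12 x y ↔ Phi (uOf x) = Phi (uOf y) := by
  unfold r12
  rw [xfun x, xfun y, rel_iff]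

lemma r12_rep (p : T4) (hp : Pim p) (x : D4dual) :
    r12 ⟨repQ p, repQ_mem p hp⟩ x ↔ p = Phi (uOf x) := by
  unfold r12
  rw [xfun x]
  show ((fun i => (Uof p i : ℚ)/2) - fun i => (uOf x i : ℚ)/2) ∈ twoD4 ↔ _
  rw [rel_iff, Phi_Uof p hp]

noncomputable def e : Quot r12 ≃ {p : T4 // Pim p} where
  toFun := Quot.lift (fun x => (⟨Phi (uOf x), Pim_Phi _ (uOf_spec₂ x)⟩ : {p : T4 // Pim p}))
    (fun a b hab => Subtype.ext ((r12_iff a b).mp hab))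
  invFun := fun p => Quot.mk r12 ⟨repQ p.1, repQ_mem p.1 p.2⟩
  left_inv := by
    intro q
    induction q using Quot.ind with
    | _ x => exact Quot.sound ((r12_rep (Phi (uOf x)) (Pim_Phi _ (uOf_spec₂ x)) x).mpr rfl)
  right_inv := by
    rintro ⟨p, hp⟩
    apply Subtype.ext
    show Phi (uOf ⟨repQ p, repQ_mem p hp⟩) = p
    have huu : uOf ⟨repQ p, repQ_mem p hp⟩ = Uof p := by
      funext i
      have h1 : repQ p i = (uOf (⟨repQ p, repQ_mem p hp⟩ : D4dual) i : ℚ) / 2 :=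
        uOf_spec₁ (⟨repQ p, repQ_mem p hp⟩ : D4dual) i
      have h2 : repQ p i = (Uof p i : ℚ) / 2 := rfl
      have h3 : ((uOf (⟨repQ p, repQ_mem p hp⟩ : D4dual) i : ℤ) : ℚ) = ((Uof p i : ℤ) : ℚ) := by
        rw [h2] at h1; linarith
      exact_mod_cast h3
    rw [huu, Phi_Uof p hp]

lemma twoD4_zero : (0 : Fin 4 → ℚ) ∈ twoD4 :=
  ⟨0, ⟨fun i => ⟨0, by simp⟩, 0, by simp⟩, by simp⟩

lemma twoD4_neg {x : Fin 4 → ℚ} (h : x ∈ twoD4) : -x ∈ twoD4 := by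
  obtain ⟨w, ⟨hint, m, hm⟩, hx⟩ := h
  choose n hn using hint
  refine ⟨-w, ⟨fun i => ⟨-n i, by simp [hn i]⟩, -m, ?_⟩, by rw [hx]; ext i; simp⟩
  simp only [Pi.neg_apply]
  rw [Finset.sum_neg_distrib, hm]
  push_cast; ring

lemma twoD4_add {x y : Fin 4 → ℚ} (hx : x ∈ twoD4) (hy : y ∈ twoD4) : x + y ∈ twoD4 := by
  obtain ⟨w, ⟨hint, m, hm⟩, hxw⟩ := hx
  obtain ⟨w', ⟨hint', m', hm'⟩, hyw⟩ := hy
  choose n hn using hint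
  choose n' hn' using hint'
  refine ⟨w + w', ⟨fun i => ⟨n i + n' i, by simp [hn i, hn' i]⟩, m + m', ?_⟩, ?_⟩
  · simp only [Pi.add_apply]
    rw [Finset.sum_add_distrib, hm, hm']
    push_cast; ring
  · rw [hxw, hyw]; ext i; simp; ring

lemma eqvGen_r12 {a b : D4dual} (h : Relation.EqvGen r12 a b) : r12 a b := by
  induction h with
  | rel _ _ h => exact h
  | refl a => show _ ∈ twoD4; simpa using twoD4_zero
  | symm a b _ ih => show _ ∈ twoD4; simpa using twoD4_neg ih
  | trans a b c _ _ ih1 ih2 => show _ ∈ twoD4; simpa using twoD4_add ih1 ih2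

lemma dot4_repQ (p : T4) : dot4 (repQ p) (repQ p) = ((∑ i, (Uof p i)^2 : ℤ) : ℚ) / 4 := by
  unfold dot4 repQ
  rw [Fin.sum_univ_four, Fin.sum_univ_four]
  push_cast
  ring

lemma nrm_iff (p : T4) (c : ℤ) :
    (∃ m : ℤ, dot4 (repQ p) (repQ p) = 4 * m + c) ↔ Nrm p = ((4 * c : ℤ) : ZMod 16) := by
  rw [dot4_repQ]
  unfold Nrm
  constructor
  · rintro ⟨m, hm⟩
    have h2 : ((∑ i, (Uof p i)^2 : ℤ) : ℚ) = ((16 * m + 4 * c : ℤ) : ℚ) := by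
      push_cast; push_cast at hm; linarith
    have h3 : (∑ i, (Uof p i)^2 : ℤ) = 16 * m + 4 * c := by exact_mod_cast h2
    rw [h3, ZMod.intCast_eq_intCast_iff]
    show (16 * m + 4 * c) % 16 = (4 * c) % 16
    omega
  · intro h
    rw [ZMod.intCast_eq_intCast_iff, Int.modEq_iff_dvd] at h
    obtain ⟨t, ht⟩ := h
    refine ⟨-t, ?_⟩
    have h5 := congrArg (Int.cast : ℤ → ℚ) ht
    push_cast at h5 ⊢
    linarith

lemma class_iff (p : T4) (hp : Pim p) (c : ℤ) :
    (∃ x : D4dual, Quot.mk r12 x = Quot.mk r12 ⟨repQ p, repQ_mem p hp⟩ ∧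
       ∃ m : ℤ, dot4 x.1 x.1 = 4 * m + c) ↔ Nrm p = ((4 * c : ℤ) : ZMod 16) := by
  constructor
  · rintro ⟨x, hqx, m, hm⟩
    have hrel : r12 x ⟨repQ p, repQ_mem p hp⟩ := eqvGen_r12 (Quot.eq.mp hqx)
    obtain ⟨m', hm'⟩ := normdiff x.1 x.2 (repQ p) (repQ_mem p hp) hrel
    refine (nrm_iff p c).mp ⟨m - m', ?_⟩
    have : dot4 x.1 x.1 - dot4 (repQ p) (repQ p) = 4 * (m' : ℚ) := by exact_mod_cast hm'
    push_cast
    linarith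
  · intro h
    obtain ⟨m, hm⟩ := (nrm_iff p c).mpr h
    exact ⟨⟨repQ p, repQ_mem p hp⟩, rfl, m, hm⟩

lemma card_class (c : ℤ) :
    Nat.card {q : Quot r12 // ∃ x : D4dual, Quot.mk r12 x = q ∧
      ∃ m : ℤ, dot4 x.1 x.1 = 4 * m + c} =
    Fintype.card {p : T4 // Pim p ∧ Nrm p = ((4 * c : ℤ) : ZMod 16)} := by
  rw [← Nat.card_eq_fintype_card]
  apply Nat.card_congr
  refine (e.subtypeEquiv (q := fun b => ∃ x : D4dual, Quot.mk r12 x = e.symm b ∧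
      ∃ m : ℤ, dot4 x.1 x.1 = 4 * m + c) (fun q => by simp only [Equiv.symm_apply_apply])).trans ?_
  refine (Equiv.subtypeEquivRight ?_).trans
    (Equiv.subtypeSubtypeEquivSubtypeInter Pim (fun p => Nrm p = ((4 * c : ℤ) : ZMod 16)))
  rintro ⟨p, hp⟩
  exact class_iff p hp c

lemma card_quot : Nat.card (Quot r12) = Fintype.card {p : T4 // Pim p} := by
  rw [← Nat.card_eq_fintype_card]
  exact Nat.card_congr e

end Aux12

open Aux12 in
set_option maxRecDepth 100000 in
/-- `D₄* = ℤ^4 + ℤ·(1/2,1/2,1/2,1/2)`; the norm `(y,y)` is well defined modulo 4 on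
`D₄*/2D₄`; this quotient has 64 elements, and the numbers of classes with
`(y,y) ≡ 0, 1, 2, 3 (mod 4)` are `4, 24, 12, 24` respectively. -/
theorem stmt12 :
    D4dual = {x : Fin 4 → ℚ | (∀ i, ∃ k : ℤ, x i = (k : ℚ)) ∨ (∀ i, ∃ k : ℤ, x i = (k : ℚ) + 1/2)} ∧
    (∀ x ∈ D4dual, ∀ y ∈ D4dual, x - y ∈ twoD4 →
      ∃ m : ℤ, dot4 x x - dot4 y y = 4 * m) ∧
    Nat.card (Quot r12) = 64 ∧
    Nat.card {q : Quot r12 // ∃ x : D4dual, Quot.mk r12 x = q ∧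
      ∃ m : ℤ, dot4 x.1 x.1 = 4 * m} = 4 ∧
    Nat.card {q : Quot r12 // ∃ x : D4dual, Quot.mk r12 x = q ∧
      ∃ m : ℤ, dot4 x.1 x.1 = 4 * m + 1} = 24 ∧
    Nat.card {q : Quot r12 // ∃ x : D4dual, Quot.mk r12 x = q ∧
      ∃ m : ℤ, dot4 x.1 x.1 = 4 * m + 2} = 12 ∧
    Nat.card {q : Quot r12 // ∃ x : D4dual, Quot.mk r12 x = q ∧
      ∃ m : ℤ, dot4 x.1 x.1 = 4 * m + 3} = 24 := by
  refine ⟨dual_eq, normdiff, ?_, ?_, ?_, ?_, ?_⟩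
  · rw [card_quot]; decide
  · rw [Nat.card_congr (Equiv.subtypeEquivRight
      (p := fun q : Quot r12 => ∃ x : D4dual, Quot.mk r12 x = q ∧
        ∃ m : ℤ, dot4 x.1 x.1 = 4 * m)
      (q := fun q : Quot r12 => ∃ x : D4dual, Quot.mk r12 x = q ∧
        ∃ m : ℤ, dot4 x.1 x.1 = 4 * (m : ℚ) + ((0:ℤ) : ℚ)) (fun q => by norm_num)),
      card_class 0]
    decide
  · rw [Nat.card_congr (Equiv.subtypeEquivRight
      (p := fun q : Quot r12 => ∃ x : D4dual, Quot.mk r12 x = q ∧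
        ∃ m : ℤ, dot4 x.1 x.1 = 4 * m + 1)
      (q := fun q : Quot r12 => ∃ x : D4dual, Quot.mk r12 x = q ∧
        ∃ m : ℤ, dot4 x.1 x.1 = 4 * (m : ℚ) + ((1:ℤ) : ℚ)) (fun q => by norm_num)),
      card_class 1]
    decide
  · rw [Nat.card_congr (Equiv.subtypeEquivRight
      (p := fun q : Quot r12 => ∃ x : D4dual, Quot.mk r12 x = q ∧
        ∃ m : ℤ, dot4 x.1 x.1 = 4 * m + 2)
      (q := fun q : Quot r12 => ∃ x : D4dual, Quot.mk r12 x = q ∧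
        ∃ m : ℤ, dot4 x.1 x.1 = 4 * (m : ℚ) + ((2:ℤ) : ℚ)) (fun q => by norm_num)),
      card_class 2]
    decide
  · rw [Nat.card_congr (Equiv.subtypeEquivRight
      (p := fun q : Quot r12 => ∃ x : D4dual, Quot.mk r12 x = q ∧
        ∃ m : ℤ, dot4 x.1 x.1 = 4 * m + 3)
      (q := fun q : Quot r12 => ∃ x : D4dual, Quot.mk r12 x = q ∧
        ∃ m : ℤ, dot4 x.1 x.1 = 4 * (m : ℚ) + ((3:ℤ) : ℚ)) (fun q => by norm_num)),
      card_class 3]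
    decide
end

section
/- Let N_8 be the lattice generated by a1,...,a8 with (a_i,a_j) = 2δ_ij together with h = (a1 + ... + a8)/2. Then N_8 satisfies the condition (Norm_2): for every vector v in the dual lattice N_8* whose norm (v,v) is not congruent to 0 modulo 2ℤ, there exists w ∈ N_8 such that 0 < (v+w, v+w) < 2. -/
/-- The dual lattice `N₈* ⊂ ℚ^8` (with respect to the form `2·dot₈`). -/
def N8dual : Set (Fin 8 → ℚ) := {x | ∀ v ∈ N8, ∃ k : ℤ, 2 * dot8 x v = k}

lemma av_mem (i : Fin 8) : av i ∈ N8 :=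
  Submodule.subset_span (Or.inl (Set.mem_range_self i))

lemma hv_mem : hv ∈ N8 :=
  Submodule.subset_span (Or.inr rfl)

lemma mem_N8_int (w : Fin 8 → ℚ) (hw : ∀ i, ∃ n : ℤ, w i = n) : w ∈ N8 := by
  choose n hn using hw
  have hrepr : w = ∑ i, (n i : ℤ) • av i := by
    funext j
    simp [av, Finset.sum_apply, hn j, Finset.sum_ite_eq, mul_ite]
  rw [hrepr]
  exact Submodule.sum_mem _ fun i _ => Submodule.smul_mem _ _ (av_mem i)

lemma mem_N8_half (w : Fin 8 → ℚ) (hw : ∀ i, ∃ n : ℤ, w i = n + 1/2) : w ∈ N8 := by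
  have h1 : w - hv ∈ N8 := by
    apply mem_N8_int
    intro i
    obtain ⟨n, hn⟩ := hw i
    exact ⟨n, by simp [hv, hn]⟩
  have : w = (w - hv) + hv := by ring
  rw [this]
  exact Submodule.add_mem _ h1 hv_mem

/-- `N₈` satisfies the condition (Norm₂): for every `v ∈ N₈*` whose norm is not
congruent to `0` modulo `2ℤ` there is `w ∈ N₈` with `0 < (v+w, v+w) < 2`. -/
theorem stmt15 :
    ∀ v ∈ N8dual, (¬ ∃ k : ℤ, 2 * dot8 v v = 2 * k) →
      ∃ w ∈ N8, 0 < 2 * dot8 (v + w) (v + w) ∧ 2 * dot8 (v + w) (v + w) < 2 := by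
  intro v hvd hodd
  -- coordinates are half-integers
  have hm : ∀ i, ∃ k : ℤ, v i = k / 2 := by
    intro i
    obtain ⟨k, hk⟩ := hvd (av i) (av_mem i)
    refine ⟨k, ?_⟩
    have : dot8 v (av i) = v i := by
      simp [dot8, av, mul_ite, Finset.sum_ite_eq']
    rw [this] at hk
    linarith
  choose m hmv using hm
  -- the sum of coordinates is an integer
  obtain ⟨s, hs⟩ := hvd hv hv_mem
  have hsum : ∑ i, v i = s := by
    have h2 : 2 * dot8 v hv = ∑ i, v i := by
      simp only [dot8, hv, Finset.mul_sum]
      refine Finset.sum_congr rfl fun i _ => by ring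
    linarith [hs, h2]
  have hmsum : ∑ i, m i = 2 * s := by
    have : ((∑ i, m i : ℤ) : ℚ) = ((2 * s : ℤ) : ℚ) := by
      push_cast
      have h3 : ∑ i, (m i : ℚ) = ∑ i, 2 * v i := by
        refine Finset.sum_congr rfl fun i _ => ?_
        rw [hmv i]; ring
      rw [h3, ← Finset.mul_sum, hsum]
    exact_mod_cast this
  -- norm condition
  have hnorm : ¬ (4 ∣ ∑ i, m i ^ 2) := by
    rintro ⟨k, hk⟩
    apply hodd
    refine ⟨k, ?_⟩
    have h1 : dot8 v v = (∑ i, m i ^ 2 : ℤ) / 4 := by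
      simp only [dot8]
      rw [Int.cast_sum, Finset.sum_div]
      refine Finset.sum_congr rfl fun i _ => ?_
      rw [hmv i]; push_cast; ring
    rw [h1, hk]; push_cast; ring
  set S : Finset (Fin 8) := Finset.univ.filter (fun i => Odd (m i)) with hS
  -- card mod 4 is nonzero
  have hc4 : ((S.card : ZMod 4) ≠ 0) := by
    have key : ((∑ i, m i ^ 2 : ℤ) : ZMod 4) = (S.card : ZMod 4) := by
      push_cast
      rw [← Finset.sum_filter_add_sum_filter_not Finset.univ (fun i => Odd (m i))]
      have h1 : ∀ i ∈ Finset.univ.filter (fun i => Odd (m i)),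
          ((m i : ZMod 4)) ^ 2 = 1 := by
        intro i hi
        simp only [Finset.mem_filter] at hi
        obtain ⟨k, hk⟩ := hi.2
        have h5 : (m i : ZMod 4) = 2 * (k : ZMod 4) + 1 := by
          rw [hk]; push_cast; ring
        rw [h5]; ring_nf
        have h4 : (4 : ZMod 4) = 0 := by decide
        rw [show (1 + (k:ZMod 4) * 4 + (k:ZMod 4) ^ 2 * 4 : ZMod 4)
            = 1 + ((k:ZMod 4) + (k:ZMod 4)^2) * 4 by ring, h4]
        ring
      have h2 : ∀ i ∈ Finset.univ.filter (fun i => ¬ Odd (m i)),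
          ((m i : ZMod 4)) ^ 2 = 0 := by
        intro i hi
        simp only [Finset.mem_filter, Int.not_odd_iff_even] at hi
        obtain ⟨k, hk⟩ := hi.2
        have h5 : (m i : ZMod 4) = (k : ZMod 4) + (k : ZMod 4) := by
          rw [hk]; push_cast; ring
        rw [h5]
        have h4 : (4 : ZMod 4) = 0 := by decide
        rw [show (((k:ZMod 4) + (k:ZMod 4)) ^ 2 : ZMod 4) = (k:ZMod 4)^2 * 4 by ring, h4]
        ring
      rw [Finset.sum_congr rfl h1, Finset.sum_congr rfl h2,
        Finset.sum_const, Finset.sum_const_zero, add_zero, nsmul_eq_mul, mul_one]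
    intro h0
    rw [h0] at key
    have h6 := (ZMod.intCast_zmod_eq_zero_iff_dvd (∑ i, m i ^ 2) 4).mp key
    exact hnorm (by simpa using h6)
  -- card is even
  have hc2 : ((S.card : ZMod 2) = 0) := by
    have key : ((∑ i, m i : ℤ) : ZMod 2) = (S.card : ZMod 2) := by
      push_cast
      rw [← Finset.sum_filter_add_sum_filter_not Finset.univ (fun i => Odd (m i))]
      have h1 : ∀ i ∈ Finset.univ.filter (fun i => Odd (m i)), ((m i : ZMod 2)) = 1 := by
        intro i hi
        simp only [Finset.mem_filter] at hi
        obtain ⟨k, hk⟩ := hi.2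
        rw [hk]; push_cast
        rw [show ((2:ZMod 2) = 0) from rfl]; ring
      have h2 : ∀ i ∈ Finset.univ.filter (fun i => ¬ Odd (m i)), ((m i : ZMod 2)) = 0 := by
        intro i hi
        simp only [Finset.mem_filter, Int.not_odd_iff_even] at hi
        obtain ⟨k, hk⟩ := hi.2
        rw [hk]; push_cast
        rw [show ((k:ZMod 2) + k = (k:ZMod 2) * 2) by ring, show ((2:ZMod 2) = 0) from rfl]
        ring
      rw [Finset.sum_congr rfl h1, Finset.sum_congr rfl h2,
        Finset.sum_const, Finset.sum_const_zero, add_zero, nsmul_eq_mul, mul_one]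
    rw [hmsum] at key
    rw [← key]; push_cast
    rw [show ((2:ZMod 2) = 0) from rfl]; ring
  have hcdvd : 2 ∣ S.card := by
    exact_mod_cast (ZMod.natCast_eq_zero_iff S.card 2).mp hc2
  have hle : S.card ≤ 8 := by simpa using Finset.card_le_univ S
  have h28 : S.card = 2 ∨ S.card = 6 := by
    have h048 : S.card = 0 ∨ S.card = 2 ∨ S.card = 4 ∨ S.card = 6 ∨ S.card = 8 := by omega
    rcases h048 with h | h | h | h | h
    · rw [h] at hc4; exact absurd (by decide) hc4
    · exact Or.inl h
    · rw [h] at hc4; exact absurd (by decide) hc4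
    · exact Or.inr h
    · rw [h] at hc4; exact absurd (by decide) hc4
  rcases h28 with hcard | hcard
  · -- two odd coordinates: target vector has 1/2 at S, 0 elsewhere
    set t : Fin 8 → ℚ := fun i => if i ∈ S then 1/2 else 0 with ht
    refine ⟨t - v, ?_, ?_⟩
    · apply mem_N8_int
      intro i
      by_cases hi : i ∈ S
      · have : Odd (m i) := by simpa [hS] using hi
        obtain ⟨k, hk⟩ := this
        refine ⟨-k, ?_⟩
        simp only [ht, Pi.sub_apply, hmv i, hk, if_pos hi]
        push_cast; ring
      · have : Even (m i) := by
          rw [← Int.not_odd_iff_even]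
          simpa [hS] using hi
        obtain ⟨k, hk⟩ := this
        refine ⟨-k, ?_⟩
        simp only [ht, Pi.sub_apply, hmv i, hk, if_neg hi]
        push_cast; ring
    · have hvt : v + (t - v) = t := by ring
      rw [hvt]
      have hdt : dot8 t t = 1/2 := by
        simp only [dot8, ht]
        have h7 : ∀ i ∈ Finset.univ,
            (if i ∈ S then (1:ℚ)/2 else 0) * (if i ∈ S then (1:ℚ)/2 else 0)
            = if i ∈ S then (1:ℚ)/4 else 0 := fun i _ => by split <;> norm_num
        rw [Finset.sum_congr rfl h7, Finset.sum_ite, Finset.sum_const, Finset.sum_const_zero,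
          Finset.filter_mem_eq_inter, Finset.univ_inter, hcard]
        norm_num
      rw [hdt]; norm_num
  · -- six odd coordinates: target vector has 0 at S, 1/2 elsewhere
    set t : Fin 8 → ℚ := fun i => if i ∈ S then 0 else 1/2 with ht
    refine ⟨t - v, ?_, ?_⟩
    · apply mem_N8_half
      intro i
      by_cases hi : i ∈ S
      · have : Odd (m i) := by simpa [hS] using hi
        obtain ⟨k, hk⟩ := this
        refine ⟨-(k+1), ?_⟩
        simp only [ht, Pi.sub_apply, hmv i, hk, if_pos hi]
        push_cast; ring
      · have : Even (m i) := by
          rw [← Int.not_odd_iff_even]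
          simpa [hS] using hi
        obtain ⟨k, hk⟩ := this
        refine ⟨-k, ?_⟩
        simp only [ht, Pi.sub_apply, hmv i, hk, if_neg hi]
        push_cast; ring
    · have hvt : v + (t - v) = t := by ring
      rw [hvt]
      have hdt : dot8 t t = 1/2 := by
        simp only [dot8, ht]
        have h7 : ∀ i ∈ Finset.univ,
            (if i ∈ S then (0:ℚ) else 1/2) * (if i ∈ S then (0:ℚ) else 1/2)
            = if i ∈ S then (0:ℚ) else 1/4 := fun i _ => by split <;> norm_num
        have h8 : Finset.univ.filter (fun i => ¬ i ∈ S) = Sᶜ := by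
          ext i; simp
        rw [Finset.sum_congr rfl h7]
        simp only [Finset.sum_ite, Finset.sum_const, smul_zero, zero_add, h8]
        rw [Finset.card_compl, hcard]
        norm_num
      rw [hdt]; norm_num
end

section
/- Let S be the rank-3 lattice with basis a, b, c and Gram matrix [[2,0,-1],[0,2,-2],[-1,-2,2]] (the lattice U ⊕ A_1), and consider the vectors P = {2a+3b+6c, a+6b+9c, 5b+6c, b, a} (all lying in the sublattice M_{1,1,3} = [a,b,3c]). Then every element of P has square 2, the Gram matrix of P (in this order) equals [[2,-2,-6,-6,-2],[-2,2,0,-6,-7],[-6,0,2,-2,-6],[-6,-6,-2,2,0],[-2,-7,-6,0,2]], and the vector ρ = (1/3)a + (7/6)b + (5/3)c satisfies (ρ, δ) = -1 for every δ ∈ P and (ρ,ρ) = -7/18. -/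
/-- The Gram matrix of `U ⊕ A₁` in the basis `a, b, c`. -/
def G17 : Matrix (Fin 3) (Fin 3) ℚ := !![2, 0, -1; 0, 2, -2; -1, -2, 2]

/-- `P = (2a+3b+6c, a+6b+9c, 5b+6c, b, a)` in the coordinates of the basis `a, b, c`. -/
def P17 : Fin 5 → (Fin 3 → ℚ) :=
  ![![2, 3, 6], ![1, 6, 9], ![0, 5, 6], ![0, 1, 0], ![1, 0, 0]]

/-- The generalized Cartan matrix `A_{1,III}`. -/
def A17 : Matrix (Fin 5) (Fin 5) ℚ :=
  !![2, -2, -6, -6, -2;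
     -2, 2, 0, -6, -7;
     -6, 0, 2, -2, -6;
     -6, -6, -2, 2, 0;
     -2, -7, -6, 0, 2]

/-- `ρ = (1/3)a + (7/6)b + (5/3)c`. -/
def rho17 : Fin 3 → ℚ := ![1/3, 7/6, 5/3]

theorem stmt17 :
    (∀ i, (∃ k : ℤ, P17 i 0 = (k : ℚ)) ∧ (∃ k : ℤ, P17 i 1 = (k : ℚ)) ∧
      (∃ k : ℤ, P17 i 2 = 3 * (k : ℚ))) ∧
    (∀ i, bil G17 (P17 i) (P17 i) = 2) ∧
    (∀ i j, bil G17 (P17 i) (P17 j) = A17 i j) ∧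
    (∀ i, bil G17 rho17 (P17 i) = -1) ∧
    bil G17 rho17 rho17 = -7/18 := by
  refine ⟨?_, ?_, ?_, ?_, ?_⟩
  · intro i
    fin_cases i
    · exact ⟨⟨_, rfl⟩, ⟨_, rfl⟩, ⟨2, by norm_num [P17]; rfl⟩⟩
    · exact ⟨⟨_, rfl⟩, ⟨_, rfl⟩, ⟨3, by norm_num [P17]; rfl⟩⟩
    · exact ⟨⟨_, rfl⟩, ⟨_, rfl⟩, ⟨2, by norm_num [P17]; rfl⟩⟩
    · exact ⟨⟨_, rfl⟩, ⟨_, rfl⟩, ⟨0, by norm_num [P17]; rfl⟩⟩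
    · exact ⟨⟨_, rfl⟩, ⟨_, rfl⟩, ⟨0, by norm_num [P17]; rfl⟩⟩
  · intro i
    fin_cases i <;> simp [bil, G17, P17, Fin.sum_univ_succ] <;> norm_num
  · intro i j
    fin_cases i <;> fin_cases j <;>
      simp [bil, G17, P17, A17, Fin.sum_univ_succ] <;> norm_num
  · intro i
    fin_cases i <;> simp [bil, G17, P17, rho17, Fin.sum_univ_succ] <;> norm_num
  · simp [bil, G17, rho17, Fin.sum_univ_succ]
    norm_num
end

section
/- Let S = U(4) ⊕ D_4 be the even hyperbolic lattice of rank 6 with basis c1, c2, e1, e2, e3, e4 where (c1,c1) = (c2,c2) = 0, (c1,c2) = -4, and e1,...,e4 are orthogonal to c1, c2 with the D_4 Cartan Gram matrix ((e_i,e_i) = 2 for all i, (e_i,e4) = -1 for i = 1,2,3, (e_i,e_j) = 0 for distinct i,j ∈ {1,2,3}); set w = e1 + e2 + e3 + 2e4. Let P consist of the 9 vectors e1, e2, e3, e4, c1 - w, c2 - w, and c1 + c2 - 2e1 - 2e2 - 2e3 - 4e4 - e_i for i = 1, 2, 3. Then every element of P has square 2, and the vector ρ = (3/2)c1 + (3/2)c2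 - 3e1 - 3e2 - 3e3 - 5e4 ∈ S ⊗ ℚ satisfies (ρ, δ) = -1 for every δ ∈ P. -/
/-- The Gram matrix of `S = U(4) ⊕ D₄` in the basis `c1, c2, e1, e2, e3, e4`. -/
def G19 : Matrix (Fin 6) (Fin 6) ℚ :=
  !![0, -4, 0, 0, 0, 0;
     -4, 0, 0, 0, 0, 0;
     0, 0, 2, 0, 0, -1;
     0, 0, 0, 2, 0, -1;
     0, 0, 0, 0, 2, -1;
     0, 0, -1, -1, -1, 2]

/-- The 9 vectors of `P`: `e1, e2, e3, e4`, `c1 - w`, `c2 - w`, and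
`c1 + c2 - 2e1 - 2e2 - 2e3 - 4e4 - e_i` for `i = 1, 2, 3`, where `w = e1+e2+e3+2e4`. -/
def P19 : Fin 9 → (Fin 6 → ℚ) :=
  ![![0, 0, 1, 0, 0, 0], ![0, 0, 0, 1, 0, 0], ![0, 0, 0, 0, 1, 0], ![0, 0, 0, 0, 0, 1],
    ![1, 0, -1, -1, -1, -2], ![0, 1, -1, -1, -1, -2],
    ![1, 1, -3, -2, -2, -4], ![1, 1, -2, -3, -2, -4], ![1, 1, -2, -2, -3, -4]]

/-- `ρ = (3/2)c1 + (3/2)c2 - 3e1 - 3e2 - 3e3 - 5e4`. -/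
def rho19 : Fin 6 → ℚ := ![3/2, 3/2, -3, -3, -3, -5]

theorem stmt19 :
    (∀ i, bil G19 (P19 i) (P19 i) = 2) ∧
    (∀ i, bil G19 rho19 (P19 i) = -1) := by
  constructor <;> intro i <;> fin_cases i <;>
    simp only [bil, G19, P19, rho19, Fin.sum_univ_succ, Finset.sum_const, Finset.card_univ,
      Fintype.card_fin, Finset.univ_eq_empty, Finset.sum_empty, Matrix.cons_val_zero,
      Matrix.cons_val_succ, Matrix.cons_val', Matrix.cons_val_fin_one, Matrix.empty_val',
      Matrix.of_apply, Matrix.head_cons, Matrix.head_fin_const] <;>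
    norm_num
end
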